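/- arXiv:1808.05255 — 7 statements merged into one kernel-verified Lean document; each statement's English description precedes it below -/
import Mathlib

section
/- (Gambler's ruin conditional expected hitting time) For 0 < q < 1/2 and a positive integer L, let τ_L(ω) = inf{N : B_N(ω) - G_N(ω) = L} (with τ_L = ∞ if no such N exists). Then the conditional expectation of τ_L given the event {τ_L < ∞} under μ_q equals L/(1-2q); equivalently, (∫_{τ_L < ∞} τ_L dμ_q) / μ_q({τ_L < ∞}) = L/(1-2q). -/
open MeasureTheory Finset

/-- Number of `true`s (steps `+1`) among the first `N` coordinates of `ω`. -/
def Bcount (ω : ℕ → Bool) (N : ℕ) : ℕ := ((range N).filter fun i => ω i = true).card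

/-- Number of `false`s (steps `-1`) among the first `N` coordinates of `ω`. -/
def Gcount (ω : ℕ → Bool) (N : ℕ) : ℕ := ((range N).filter fun i => ω i = false).card

/-- The hitting time `τ_L(ω) = inf {N | B_N(ω) - G_N(ω) = L}` (equal to `0 = sInf ∅`
off the event `{τ_L < ∞}`, where its value is irrelevant). -/
noncomputable def tau (L : ℕ) (ω : ℕ → Bool) : ℕ :=
  sInf {N | (Bcount ω N : ℤ) - (Gcount ω N : ℤ) = L}

open Filter
open scoped ENNReal Classical Topology

namespace GR
abbrev Ω := ℕ → Bool
def S (ω : Ω) (n : ℕ) : ℤ := (Bcount ω n : ℤ) - (Gcount ω n : ℤ)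
def X (ω : Ω) (i : ℕ) : ℤ := if ω i then 1 else -1

lemma S_eq_sum (ω : Ω) (n : ℕ) : S ω n = ∑ i ∈ range n, X ω i := by
  induction n with
  | zero => simp [S, Bcount, Gcount]
  | succ n ih =>
    have hB : Bcount ω (n+1) = Bcount ω n + (if ω n then 1 else 0) := by
      simp [Bcount, Finset.range_add_one, Finset.filter_insert]
      split <;> simp [Finset.card_insert_of_notMem, *]
    have hG : Gcount ω (n+1) = Gcount ω n + (if ω n then 0 else 1) := by
      simp [Gcount, Finset.range_add_one, Finset.filter_insert]
      split <;> simp [Finset.card_insert_of_notMem, *]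
    rw [Finset.sum_range_succ, ← ih]
    simp [S, hB, hG, X]
    split <;> push_cast <;> ring

lemma S_succ (ω : Ω) (n : ℕ) : S ω (n+1) = S ω n + X ω n := by
  simp [S_eq_sum, Finset.sum_range_succ]

lemma S_zero (ω : Ω) : S ω 0 = 0 := by simp [S_eq_sum]

lemma abs_S_le (ω : Ω) (n : ℕ) : |S ω n| ≤ n := by
  rw [S_eq_sum]
  calc |∑ i ∈ range n, X ω i| ≤ ∑ i ∈ range n, |X ω i| := Finset.abs_sum_le_sum_abs _ _
    _ ≤ ∑ i ∈ range n, 1 := by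
        apply Finset.sum_le_sum; intro i _; simp [X]; split <;> simp
    _ = n := by simp

lemma S_congr {ω ω' : Ω} {n : ℕ} (h : ∀ i < n, ω i = ω' i) {m : ℕ} (hm : m ≤ n) :
    S ω m = S ω' m := by
  rw [S_eq_sum, S_eq_sum]
  apply Finset.sum_congr rfl
  intro i hi
  simp only [Finset.mem_range] at hi
  simp [X, h i (lt_of_lt_of_le hi hm)]

variable (L : ℕ)

/-- the event {τ_L < ∞} -/
def A : Set Ω := {ω | ∃ N, S ω N = L}
/-- not yet hit by time i -/
def NH (i : ℕ) : Set Ω := {ω | ∀ m ≤ i, S ω m ≠ L}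

lemma tau_eq_sInf (ω : Ω) : tau L ω = sInf {N | S ω N = L} := rfl

lemma tau_mem {ω : Ω} (h : ω ∈ A L) : S ω (tau L ω) = L :=
  Nat.sInf_mem (h : ∃ N, S ω N = (L:ℤ))

variable {L}
lemma tau_pos (hL : 0 < L) {ω : Ω} (h : ω ∈ A L) : 0 < tau L ω := by
  rcases Nat.eq_zero_or_pos (tau L ω) with h0 | h0
  · exfalso
    have := tau_mem L h
    rw [h0, S_zero] at this
    omega
  · exact h0

lemma mem_A_of_tau_pos {ω : Ω} (h : 0 < tau L ω) : ω ∈ A L := by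
  by_contra hA
  have : {N | S ω N = (L:ℤ)} = ∅ := by
    ext N; simp only [Set.mem_setOf_eq, Set.mem_empty_iff_false, iff_false]
    exact fun hN => hA ⟨N, hN⟩
  have : tau L ω = 0 := by rw [tau_eq_sInf, this]; exact Nat.sInf_empty
  omega

lemma tau_gt_iff {ω : Ω} (h : ω ∈ A L) (i : ℕ) : i < tau L ω ↔ ω ∈ NH L i := by
  constructor
  · intro hi m hm hS
    have : tau L ω ≤ m := Nat.sInf_le hS
    omega
  · intro hN
    by_contra hc
    push_neg at hc
    exact hN _ hc (tau_mem L h)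

lemma NH_anti {i j : ℕ} (hij : i ≤ j) : NH L j ⊆ NH L i :=
  fun ω hω m hm => hω m (le_trans hm hij)

lemma tau_le_iff_not {ω : Ω} (h : ω ∈ A L) (i : ℕ) : tau L ω ≤ i ↔ ω ∉ NH L i := by
  rw [← not_lt, not_iff_not]; exact tau_gt_iff h i

/-- before hitting, the walk is below L -/
lemma S_lt_of_NH (hL : 0 < L) {ω : Ω} {n : ℕ} (h : ω ∈ NH L n) : S ω n < L := by
  induction n with
  | zero => rw [S_zero]; exact_mod_cast hL
  | succ n ih =>
    have h' : ω ∈ NH L n := NH_anti (Nat.le_succ n) h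
    have h1 : S ω n < L := ih h'
    have h2 : S ω (n+1) ≠ L := h (n+1) le_rfl
    have h3 : S ω (n+1) ≤ S ω n + 1 := by
      rw [S_succ]; simp [X]; split <;> omega
    omega

open Classical in
/-- the stopped increment sum -/
noncomputable def V (L : ℕ) (n : ℕ) (ω : Ω) : ℤ := ∑ i ∈ range n, if ω ∈ NH L i then X ω i else 0

lemma V_eq_S {ω : Ω} {n : ℕ} (h : ω ∈ NH L (n-1)) (hn : 0 < n) : V L n ω = S ω n := by
  classical
  rw [V, S_eq_sum]
  apply Finset.sum_congr rfl
  intro i hi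
  simp only [Finset.mem_range] at hi
  rw [if_pos (NH_anti (by omega) h)]

lemma V_le (hL : 0 < L) (ω : Ω) (n : ℕ) : V L n ω ≤ L := by
  classical
  induction n with
  | zero => simp [V]
  | succ n ih =>
    have : V L (n+1) ω = V L n ω + (if ω ∈ NH L n then X ω n else 0) := by
      rw [V, V, Finset.sum_range_succ]
    rw [this]
    by_cases h : ω ∈ NH L n
    · rw [if_pos h]
      rcases Nat.eq_zero_or_pos n with h0 | h0
      · subst h0; simp [V, S_zero]
        have := S_lt_of_NH hL (NH_anti (Nat.zero_le 0) h)
        rw [S_zero] at this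
        simp [X]; split <;> omega
      · have hV : V L n ω = S ω n := V_eq_S (NH_anti (by omega) h) h0
        have hS : S ω n < L := S_lt_of_NH hL h
        rw [hV]
        simp [X]; split <;> omega
    · rw [if_neg h]; omega

lemma V_eq_S_min {ω : Ω} (h : ω ∈ A L) (n : ℕ) : V L n ω = S ω (min (tau L ω) n) := by
  classical
  rw [V, S_eq_sum]
  have h1 : ∀ i, (ω ∈ NH L i) ↔ i < tau L ω := fun i => (tau_gt_iff h i).symm
  calc (∑ i ∈ range n, if ω ∈ NH L i then X ω i else 0)
      = ∑ i ∈ (range n).filter (fun i => ω ∈ NH L i), X ω i := (Finset.sum_filter _ _).symm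
    _ = ∑ i ∈ range (min (tau L ω) n), X ω i := by
        apply Finset.sum_congr _ (fun _ _ => rfl)
        ext i
        simp only [Finset.mem_filter, Finset.mem_range, h1, Nat.lt_min]
        tauto

lemma abs_V_le_tau {ω : Ω} (h : ω ∈ A L) (n : ℕ) : |V L n ω| ≤ tau L ω := by
  rw [V_eq_S_min h n]
  calc |S ω (min (tau L ω) n)| ≤ ((min (tau L ω) n : ℕ) : ℤ) := abs_S_le ω _
    _ ≤ (tau L ω : ℤ) := by exact_mod_cast min_le_left (tau L ω) n

lemma V_eventually_eq {ω : Ω} (h : ω ∈ A L) {n : ℕ} (hn : tau L ω ≤ n) : V L n ω = L := by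
  rw [V_eq_S_min h n, min_eq_left hn]
  exact tau_mem L h

/-- cylinder set: first n coordinates agree with w -/
def Cyl (n : ℕ) (w : Ω) : Set Ω := {ω | ∀ i < n, ω i = w i}

/-- extension of a finite word to Ω -/
def ext (n : ℕ) (w : Fin n → Bool) : Ω := fun i => if h : i < n then w ⟨i, h⟩ else false

lemma measurableSet_coord (i : ℕ) (b : Bool) : MeasurableSet {ω : Ω | ω i = b} := by
  have : Measurable fun ω : Ω => ω i := measurable_pi_apply i
  exact this (MeasurableSet.of_discrete (s := {b}))

lemma measurableSet_cyl (n : ℕ) (w : Ω) : MeasurableSet (Cyl n w) := by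
  have : Cyl n w = ⋂ i ∈ Finset.range n, {ω : Ω | ω i = w i} := by
    ext ω; simp [Cyl]
  rw [this]
  exact Finset.measurableSet_biInter _ (fun i _ => measurableSet_coord i (w i))

variable {ν : Measure Ω} {c : Bool → ℝ≥0∞}

/-- the cylinder hypothesis -/
def CylMeasure (ν : Measure Ω) (c : Bool → ℝ≥0∞) : Prop :=
  ∀ (s : Finset ℕ) (f : ℕ → Bool), ν {ω | ∀ i ∈ s, ω i = f i} = ∏ i ∈ s, c (f i)

lemma meas_cyl (hν : CylMeasure ν c) (n : ℕ) (w : Ω) :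
    ν (Cyl n w) = ∏ i ∈ range n, c (w i) := by
  have : Cyl n w = {ω | ∀ i ∈ range n, ω i = w i} := by ext ω; simp [Cyl]
  rw [this, hν]

/-- the word of a configuration -/
def wrd (n : ℕ) (ω : Ω) : Fin n → Bool := fun i => ω i

lemma ext_wrd_agree (n : ℕ) (ω : Ω) : ∀ i < n, ext n (wrd n ω) i = ω i := by
  intro i hi; simp [ext, wrd, hi]

lemma mem_cyl_self (n : ℕ) (ω : Ω) : ω ∈ Cyl n (ext n (wrd n ω)) := by
  intro i hi; simp [ext, wrd, hi]

lemma cyl_eq_of_mem {n : ℕ} {w w' : Fin n → Bool} {ω : Ω}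
    (h : ω ∈ Cyl n (ext n w)) (h' : ω ∈ Cyl n (ext n w')) : w = w' := by
  funext i
  have h1 := h i.1 i.2
  have h2 := h' i.1 i.2
  simp [ext, i.2] at h1 h2
  rw [← h1, h2]

/-- decomposition of a cylinder event -/
lemma event_eq_biUnion (n : ℕ) (E : Set Ω)
    (hE : ∀ ω ω', (∀ i < n, ω i = ω' i) → (ω ∈ E ↔ ω' ∈ E)) :
    E = ⋃ w ∈ Finset.univ.filter (fun w : Fin n → Bool => ext n w ∈ E), Cyl n (ext n w) := by
  classical
  ext ω
  simp only [Set.mem_iUnion, Finset.mem_filter, Finset.mem_univ, true_and, exists_prop]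
  constructor
  · intro hω
    refine ⟨wrd n ω, ?_, mem_cyl_self n ω⟩
    rw [hE (ext n (wrd n ω)) ω (ext_wrd_agree n ω)]
    exact hω
  · rintro ⟨w, hw, hmem⟩
    rw [hE ω (ext n w) (fun i hi => hmem i hi)]
    exact hw

lemma meas_event (hν : CylMeasure ν c) (n : ℕ) (E : Set Ω)
    (hE : ∀ ω ω', (∀ i < n, ω i = ω' i) → (ω ∈ E ↔ ω' ∈ E)) :
    ν E = ∑ w ∈ Finset.univ.filter (fun w : Fin n → Bool => ext n w ∈ E),
            ∏ i ∈ range n, c (ext n w i) := by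
  classical
  have hdisj : (Finset.univ.filter (fun w : Fin n → Bool => ext n w ∈ E) : Set (Fin n → Bool)).PairwiseDisjoint (fun w => Cyl n (ext n w)) := by
    intro w hw w' hw' hne
    simp only [Function.onFun]
    rw [Set.disjoint_left]
    intro ω h1 h2
    exact hne (cyl_eq_of_mem h1 h2)
  conv_lhs => rw [event_eq_biUnion n E hE]
  rw [measure_biUnion_finset hdisj (fun w _ => measurableSet_cyl n _)]
  exact Finset.sum_congr rfl fun w _ => meas_cyl hν n _

lemma cyl_inter_coord (n : ℕ) (w : Ω) (b : Bool) :
    Cyl n w ∩ {ω | ω n = b} = Cyl (n+1) (Function.update w n b) := by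
  ext ω
  simp only [Cyl, Set.mem_inter_iff, Set.mem_setOf_eq]
  constructor
  · rintro ⟨h1, h2⟩ i hi
    rcases Nat.lt_or_ge i n with h | h
    · rw [Function.update_of_ne (by omega)]; exact h1 i h
    · have : i = n := by omega
      subst this; rw [Function.update_self]; exact h2
  · intro h
    constructor
    · intro i hi
      have := h i (by omega)
      rwa [Function.update_of_ne (by omega)] at this
    · have := h n (by omega)
      rwa [Function.update_self] at this

lemma meas_cyl_inter_coord (hν : CylMeasure ν c) (n : ℕ) (w : Ω) (b : Bool) :
    ν (Cyl n w ∩ {ω | ω n = b}) = c b * ν (Cyl n w) := by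
  rw [cyl_inter_coord, meas_cyl hν, meas_cyl hν, Finset.prod_range_succ,
    Function.update_self, mul_comm]
  congr 1
  exact Finset.prod_congr rfl fun i hi => by
    rw [Function.update_of_ne (by simp at hi; omega)]

/-- one-step independence -/
lemma meas_event_inter_coord (hν : CylMeasure ν c) (n : ℕ) (E : Set Ω)
    (hE : ∀ ω ω', (∀ i < n, ω i = ω' i) → (ω ∈ E ↔ ω' ∈ E)) (b : Bool) :
    ν (E ∩ {ω | ω n = b}) = c b * ν E := by
  classical
  have hdisj : (Finset.univ.filter (fun w : Fin n → Bool => ext n w ∈ E) : Set (Fin n → Bool)).PairwiseDisjoint (fun w => Cyl n (ext n w) ∩ {ω : Ω | ω n = b}) := by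
    intro w hw w' hw' hne
    simp only [Function.onFun]
    apply Set.disjoint_left.2
    intro ω h1 h2
    exact hne (cyl_eq_of_mem h1.1 h2.1)
  have hdec : E ∩ {ω : Ω | ω n = b} = ⋃ w ∈ Finset.univ.filter (fun w : Fin n → Bool => ext n w ∈ E), (Cyl n (ext n w) ∩ {ω : Ω | ω n = b}) := by
    conv_lhs => rw [event_eq_biUnion n E hE]
    rw [Set.iUnion₂_inter]
  rw [hdec, measure_biUnion_finset hdisj
    (fun w _ => (measurableSet_cyl n _).inter (measurableSet_coord n b))]
  rw [Finset.sum_congr rfl (fun w _ => meas_cyl_inter_coord hν n _ b), ← Finset.mul_sum]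
  congr 1
  conv_rhs => rw [event_eq_biUnion n E hE]
  rw [measure_biUnion_finset ?_ (fun w _ => measurableSet_cyl n _)]
  intro w hw w' hw' hne
  simp only [Function.onFun]
  rw [Set.disjoint_left]
  intro ω h1 h2
  exact hne (cyl_eq_of_mem h1 h2)

lemma prod_weights (c : Bool → ℝ≥0∞) (w : Ω) (n : ℕ) :
    ∏ i ∈ range n, c (w i) = c true ^ (Bcount w n) * c false ^ (Gcount w n) := by
  classical
  rw [← Finset.prod_filter_mul_prod_filter_not (range n) (fun i => w i = true)]
  congr 1
  · rw [Finset.prod_congr rfl (fun i hi => by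
      rw [(Finset.mem_filter.1 hi).2]), Finset.prod_const]
    rfl
  · have hfil : (range n).filter (fun i => ¬(w i = true)) = (range n).filter (fun i => w i = false) := by
      apply Finset.filter_congr; intro i _; simp
    rw [hfil, Finset.prod_congr rfl (fun i hi => by
      rw [(Finset.mem_filter.1 hi).2]), Finset.prod_const]
    rfl

lemma tilt {ν ν' : Measure Ω} {a b : ℝ≥0∞}
    (hν : CylMeasure ν (fun x => if x then a else b))
    (hν' : CylMeasure ν' (fun x => if x then b else a))
    (L n : ℕ) (E : Set Ω)
    (hE : ∀ ω ω', (∀ i < n, ω i = ω' i) → (ω ∈ E ↔ ω' ∈ E))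
    (hS : ∀ ω ∈ E, (Bcount ω n : ℤ) - (Gcount ω n : ℤ) = L) :
    b ^ L * ν E = a ^ L * ν' E := by
  classical
  rw [meas_event hν n E hE, meas_event hν' n E hE, Finset.mul_sum, Finset.mul_sum]
  apply Finset.sum_congr rfl
  intro w hw
  have hwE : ext n w ∈ E := (Finset.mem_filter.1 hw).2
  have hBG := hS (ext n w) hwE
  set B := Bcount (ext n w) n
  set G := Gcount (ext n w) n
  have hBGL : B = G + L := by omega
  have h1 : (∏ i ∈ range n, if ext n w i = true then a else b) = a ^ B * b ^ G := by
    simpa using prod_weights (fun x => if x then a else b) (ext n w) n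
  have h2 : (∏ i ∈ range n, if ext n w i = true then b else a) = b ^ B * a ^ G := by
    simpa using prod_weights (fun x => if x then b else a) (ext n w) n
  rw [h1, h2, hBGL, pow_add]
  ring

section Meas

lemma measurable_X (i : ℕ) : Measurable (fun ω : Ω => X ω i) := by
  have : (fun ω : Ω => X ω i) = fun ω => if ω i = true then (1:ℤ) else -1 := by
    funext ω; simp [X]
  rw [this]
  exact Measurable.ite (measurableSet_coord i true) measurable_const measurable_const

lemma measurable_S (n : ℕ) : Measurable (fun ω : Ω => S ω n) := by
  have : (fun ω : Ω => S ω n) = fun ω => ∑ i ∈ range n, X ω i := by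
    funext ω; exact S_eq_sum ω n
  rw [this]
  exact Finset.measurable_sum _ (fun i _ => measurable_X i)

lemma measurableSet_S_eq (n : ℕ) (L : ℤ) : MeasurableSet {ω : Ω | S ω n = L} :=
  (measurable_S n) (MeasurableSet.of_discrete (s := {L}))

lemma measurableSet_NH (L i : ℕ) : MeasurableSet (NH L i) := by
  have : NH L i = ⋂ m ∈ Set.Iic i, {ω : Ω | S ω m = L}ᶜ := by
    ext ω; simp [NH]
  rw [this]
  exact MeasurableSet.biInter (Set.to_countable _)
    (fun m _ => (measurableSet_S_eq m L).compl)

lemma measurableSet_A (L : ℕ) : MeasurableSet (A L) := by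
  have : A L = ⋃ N, {ω : Ω | S ω N = L} := by ext ω; simp [A]
  rw [this]
  exact MeasurableSet.iUnion (fun N => measurableSet_S_eq N L)

lemma tau_eq_iff {L : ℕ} (hL : 0 < L) {ω : Ω} {n : ℕ} (hn : 0 < n) :
    tau L ω = n ↔ (S ω n = L ∧ ∀ m < n, S ω m ≠ L) := by
  constructor
  · intro h
    have hA : ω ∈ A L := mem_A_of_tau_pos (h ▸ hn)
    refine ⟨h ▸ tau_mem L hA, ?_⟩
    intro m hm hS
    have : tau L ω ≤ m := Nat.sInf_le hS
    omega
  · rintro ⟨h1, h2⟩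
    apply le_antisymm (Nat.sInf_le h1)
    by_contra hc
    push_neg at hc
    have hne : {N | S ω N = (L:ℤ)}.Nonempty := ⟨n, h1⟩
    have := Nat.sInf_mem hne
    exact h2 _ hc this

lemma measurableSet_tau_eq (L n : ℕ) (hL : 0 < L) (hn : 0 < n) :
    MeasurableSet {ω : Ω | tau L ω = n} := by
  have : {ω : Ω | tau L ω = n} = {ω | S ω n = L} ∩ ⋂ m ∈ Set.Iio n, {ω : Ω | S ω m = L}ᶜ := by
    ext ω
    rw [Set.mem_setOf_eq, tau_eq_iff hL hn]
    simp
  rw [this]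
  exact (measurableSet_S_eq n L).inter (MeasurableSet.biInter (Set.to_countable _)
    (fun m _ => (measurableSet_S_eq m L).compl))

lemma measurable_tau (L : ℕ) (hL : 0 < L) : Measurable (tau L) := by
  apply measurable_to_countable'
  intro n
  rcases Nat.eq_zero_or_pos n with h0 | h0
  · subst h0
    have : tau L ⁻¹' {0} = (⋃ n : ℕ, {ω : Ω | tau L ω = n + 1})ᶜ := by
      ext ω
      simp only [Set.mem_preimage, Set.mem_singleton_iff, Set.mem_compl_iff, Set.mem_iUnion,
        Set.mem_setOf_eq, not_exists]
      constructor
      · intro h n hn; omega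
      · intro h
        rcases Nat.eq_zero_or_pos (tau L ω) with h1 | h1
        · exact h1
        · exfalso; exact (by have := h (tau L ω - 1); omega : False)
    rw [this]
    exact (MeasurableSet.iUnion (fun n => measurableSet_tau_eq L (n+1) hL (by omega))).compl
  · exact measurableSet_tau_eq L n hL h0

lemma measurable_V (L n : ℕ) : Measurable (V L n) := by
  apply Finset.measurable_sum
  intro i _
  exact Measurable.ite (measurableSet_NH L i) (measurable_X i) measurable_const

/-- cylindricity of NH -/
lemma NH_cylindrical (L i : ℕ) (ω ω' : Ω) (h : ∀ j < i, ω j = ω' j) :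
    ω ∈ NH L i ↔ ω' ∈ NH L i := by
  have : ∀ m ≤ i, S ω m = S ω' m := fun m hm => S_congr h hm
  constructor
  · intro hN m hm; rw [← this m hm]; exact hN m hm
  · intro hN m hm; rw [this m hm]; exact hN m hm

/-- cylindricity of {tau = n} -/
lemma tau_eq_cylindrical {L : ℕ} (hL : 0 < L) (n : ℕ) (hn : 0 < n) (ω ω' : Ω)
    (h : ∀ j < n, ω j = ω' j) :
    tau L ω = n ↔ tau L ω' = n := by
  have hS : ∀ m ≤ n, S ω m = S ω' m := fun m hm => S_congr h hm
  rw [tau_eq_iff hL hn, tau_eq_iff hL hn]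
  constructor
  · rintro ⟨h1, h2⟩
    exact ⟨(hS n le_rfl) ▸ h1, fun m hm => (hS m hm.le) ▸ h2 m hm⟩
  · rintro ⟨h1, h2⟩
    exact ⟨(hS n le_rfl).symm ▸ h1, fun m hm => (hS m hm.le).symm ▸ h2 m hm⟩

/-- {tau = n} ⊆ walks with S n = L -/
lemma tau_eq_subset {L : ℕ} (hL : 0 < L) {n : ℕ} (hn : 0 < n) :
    ∀ ω ∈ {ω : Ω | tau L ω = n}, S ω n = L := by
  intro ω h
  exact ((tau_eq_iff hL hn).1 h).1

end Meas

section Wald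
theorem wald_main {ν : Measure Ω} [IsProbabilityMeasure ν] {p : ℝ} (hp1 : 1/2 < p) (hp2 : p < 1)
    (hν : CylMeasure ν (fun x => if x then ENNReal.ofReal p else ENNReal.ofReal (1-p)))
    {L : ℕ} (hL : 0 < L) :
    ν (A L) = 1 ∧
      ∫⁻ ω in A L, (tau L ω : ℝ≥0∞) ∂ν = ENNReal.ofReal (L / (2*p - 1)) := by
  classical
  have hp0 : 0 < p := by linarith
  have hdrift : 0 < 2*p - 1 := by linarith
  set u : ℕ → ℝ≥0∞ := fun i => ν (NH L i) with hu
  set ub : ℕ → ℝ := fun i => (u i).toReal with hub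
  have hu_ne_top : ∀ i, u i ≠ ∞ := fun i => measure_ne_top ν _
  have hu_ofReal : ∀ i, u i = ENNReal.ofReal (ub i) := fun i =>
    (ENNReal.ofReal_toReal (hu_ne_top i)).symm
  have hub_nonneg : ∀ i, 0 ≤ ub i := fun i => ENNReal.toReal_nonneg
  -- one-step independence
  have h_step : ∀ (i : ℕ) (b : Bool),
      ν (NH L i ∩ {ω | ω i = b}) = (if b then ENNReal.ofReal p else ENNReal.ofReal (1-p)) * u i :=
    fun i b => meas_event_inter_coord hν i (NH L i) (NH_cylindrical L i) b
  -- pointwise decomposition of V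
  have hVdec : ∀ (n : ℕ) (ω : Ω), ((V L n ω : ℤ) : ℝ) =
      ∑ i ∈ range n, ((NH L i ∩ {ω' | ω' i = true}).indicator (fun _ => (1:ℝ)) ω
        - (NH L i ∩ {ω' | ω' i = false}).indicator (fun _ => (1:ℝ)) ω) := by
    intro n ω
    rw [V]
    push_cast
    apply Finset.sum_congr rfl
    intro i _
    by_cases hN : ω ∈ NH L i
    · cases hb : ω i
      · simp [Set.indicator, hN, hb, X]
      · simp [Set.indicator, hN, hb, X]
    · simp [Set.indicator, hN]
  have hItrue : ∀ i, Integrable ((NH L i ∩ {ω' : Ω | ω' i = true}).indicator (fun _ => (1:ℝ))) ν :=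
    fun i => (integrable_const 1).indicator ((measurableSet_NH L i).inter (measurableSet_coord i true))
  have hIfalse : ∀ i, Integrable ((NH L i ∩ {ω' : Ω | ω' i = false}).indicator (fun _ => (1:ℝ))) ν :=
    fun i => (integrable_const 1).indicator ((measurableSet_NH L i).inter (measurableSet_coord i false))
  have hInt : ∀ n, Integrable (fun ω => ((V L n ω : ℤ) : ℝ)) ν := by
    intro n
    have : (fun ω => ((V L n ω : ℤ) : ℝ)) = fun ω =>
        ∑ i ∈ range n, ((NH L i ∩ {ω' | ω' i = true}).indicator (fun _ => (1:ℝ)) ω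
          - (NH L i ∩ {ω' | ω' i = false}).indicator (fun _ => (1:ℝ)) ω) := by
      funext ω; exact hVdec n ω
    rw [this]
    exact integrable_finset_sum _ (fun i _ => (hItrue i).sub (hIfalse i))
  -- Wald identity for truncated time
  have hIVn : ∀ n, ∫ ω, ((V L n ω : ℤ) : ℝ) ∂ν = (2*p-1) * ∑ i ∈ range n, ub i := by
    intro n
    have heq : (fun ω => ((V L n ω : ℤ) : ℝ)) = fun ω =>
        ∑ i ∈ range n, ((NH L i ∩ {ω' | ω' i = true}).indicator (fun _ => (1:ℝ)) ω
          - (NH L i ∩ {ω' | ω' i = false}).indicator (fun _ => (1:ℝ)) ω) := by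
      funext ω; exact hVdec n ω
    rw [heq, integral_finset_sum (range n)
      (f := fun i ω => (NH L i ∩ {ω' | ω' i = true}).indicator (fun _ => (1:ℝ)) ω
        - (NH L i ∩ {ω' | ω' i = false}).indicator (fun _ => (1:ℝ)) ω)
      (fun i _ => (hItrue i).sub (hIfalse i)), Finset.mul_sum]
    apply Finset.sum_congr rfl
    intro i _
    rw [integral_sub (hItrue i) (hIfalse i)]
    have e1 : ∫ ω, (NH L i ∩ {ω' : Ω | ω' i = true}).indicator (fun _ => (1:ℝ)) ω ∂ν
        = (ν (NH L i ∩ {ω' : Ω | ω' i = true})).toReal := by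
      exact integral_indicator_one ((measurableSet_NH L i).inter (measurableSet_coord i true))
    have e2 : ∫ ω, (NH L i ∩ {ω' : Ω | ω' i = false}).indicator (fun _ => (1:ℝ)) ω ∂ν
        = (ν (NH L i ∩ {ω' : Ω | ω' i = false})).toReal := by
      exact integral_indicator_one ((measurableSet_NH L i).inter (measurableSet_coord i false))
    rw [e1, e2, h_step i true, h_step i false,
      show (if (true:Bool) = true then ENNReal.ofReal p else ENNReal.ofReal (1-p)) = ENNReal.ofReal p from rfl,
      show (if (false:Bool) = true then ENNReal.ofReal p else ENNReal.ofReal (1-p)) = ENNReal.ofReal (1-p) from rfl,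
      ENNReal.toReal_mul, ENNReal.toReal_mul, ENNReal.toReal_ofReal hp0.le,
      ENNReal.toReal_ofReal (by linarith)]
    ring
  -- bound
  have hsum_le : ∀ n, ∑ i ∈ range n, ub i ≤ L / (2*p-1) := by
    intro n
    rw [le_div_iff₀ hdrift]
    have h1 : ∫ ω, ((V L n ω : ℤ) : ℝ) ∂ν ≤ ∫ _ω, (L:ℝ) ∂ν := by
      apply integral_mono (hInt n) (integrable_const _)
      intro ω
      show ((V L n ω : ℤ) : ℝ) ≤ ((L:ℕ) : ℝ)
      exact_mod_cast V_le hL ω n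
    rw [hIVn n, integral_const] at h1
    simp only [measure_univ, probReal_univ, ENNReal.toReal_one, smul_eq_mul, one_mul] at h1
    linarith [h1]
  have hSummable : Summable ub := summable_of_sum_range_le hub_nonneg hsum_le
  set U : ℝ := ∑' i, ub i with hU
  -- A has full measure
  have hsub : ∀ i, (A L)ᶜ ⊆ NH L i := by
    intro i ω hω m _ hS
    exact hω ⟨m, hS⟩
  have hAc_null : ν (A L)ᶜ = 0 := by
    have h1 : ∀ i, ν (A L)ᶜ ≤ u i := fun i => measure_mono (hsub i)
    have h2 : Tendsto ub atTop (𝓝 0) := hSummable.tendsto_atTop_zero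
    have h3 : Tendsto u atTop (𝓝 0) := by
      have : Tendsto (fun i => ENNReal.ofReal (ub i)) atTop (𝓝 (ENNReal.ofReal 0)) :=
        (ENNReal.continuous_ofReal.tendsto 0).comp h2
      simpa [ENNReal.ofReal_zero, ← hu_ofReal] using this
    have := ge_of_tendsto h3 (Eventually.of_forall h1)
    simpa using this
  have hA1 : ν (A L) = 1 := by
    rwa [← prob_compl_eq_zero_iff (measurableSet_A L)]
  have hAe : ∀ᵐ ω ∂ν, ω ∈ A L := by
    rw [ae_iff]
    exact hAc_null
  -- lintegral of tau over A
  have hANH : ∀ i, ν (A L ∩ NH L i) = u i := by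
    intro i
    have := measure_inter_add_diff (μ := ν) (NH L i) (measurableSet_A L)
    have hdiff : ν (NH L i \ A L) = 0 :=
      measure_mono_null (fun ω hω => hω.2) hAc_null
    rw [hdiff, add_zero] at this
    rw [Set.inter_comm]
    exact this
  have htsum_ptwise : ∀ ω, (A L).indicator (fun ω => ((tau L ω : ℕ) : ℝ≥0∞)) ω
      = ∑' i, ((A L) ∩ NH L i).indicator (fun _ => (1:ℝ≥0∞)) ω := by
    intro ω
    by_cases hA : ω ∈ A L
    · rw [Set.indicator_of_mem hA]
      have hiff : ∀ i, (ω ∈ A L ∩ NH L i) ↔ i < tau L ω := by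
        intro i
        rw [Set.mem_inter_iff]
        constructor
        · intro h; exact (tau_gt_iff hA i).2 h.2
        · intro h; exact ⟨hA, (tau_gt_iff hA i).1 h⟩
      have : ∀ i, ((A L) ∩ NH L i).indicator (fun _ => (1:ℝ≥0∞)) ω
          = if i < tau L ω then 1 else 0 := by
        intro i
        by_cases h : i < tau L ω
        · rw [if_pos h, Set.indicator_of_mem ((hiff i).2 h)]
        · rw [if_neg h, Set.indicator_of_notMem (fun hc => h ((hiff i).1 hc))]
      rw [tsum_congr this]
      rw [tsum_eq_sum (s := range (tau L ω)) (fun i hi => by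
        rw [if_neg (by simpa using hi)])]
      rw [Finset.sum_congr rfl (fun i hi => if_pos (by simpa using hi)), Finset.sum_const,
        card_range, nsmul_eq_mul, mul_one]
    · rw [Set.indicator_of_notMem hA]
      symm
      have hz : ∀ i, ((A L) ∩ NH L i).indicator (fun _ => (1:ℝ≥0∞)) ω = 0 :=
        fun i => Set.indicator_of_notMem (fun hc => hA hc.1) _
      rw [tsum_congr hz, tsum_zero]
  have hlin : ∫⁻ ω in A L, (tau L ω : ℝ≥0∞) ∂ν = ∑' i, u i := by
    rw [← lintegral_indicator (measurableSet_A L)]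
    have : (fun ω => (A L).indicator (fun ω => ((tau L ω : ℕ) : ℝ≥0∞)) ω)
        = fun ω => ∑' i, ((A L) ∩ NH L i).indicator (fun _ => (1:ℝ≥0∞)) ω := by
      funext ω; exact htsum_ptwise ω
    rw [this, lintegral_tsum (fun i => (measurable_const.indicator
      ((measurableSet_A L).inter (measurableSet_NH L i))).aemeasurable)]
    refine tsum_congr fun i => ?_
    rw [← hANH i]
    exact lintegral_indicator_one ((measurableSet_A L).inter (measurableSet_NH L i))
  have htsumU : ∑' i, u i = ENNReal.ofReal U := by
    rw [hU, ENNReal.ofReal_tsum_of_nonneg hub_nonneg hSummable]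
    exact tsum_congr fun i => hu_ofReal i
  -- integrability of tau
  have hg_meas : Measurable (fun ω => ((tau L ω : ℕ) : ℝ)) :=
    Measurable.comp (f := tau L) Measurable.of_discrete (measurable_tau L hL)
  have hg_lint : ∫⁻ ω, ENNReal.ofReal ((tau L ω : ℕ) : ℝ) ∂ν = ENNReal.ofReal U := by
    have he : (fun ω => ENNReal.ofReal ((tau L ω : ℕ) : ℝ)) = fun ω => ((tau L ω : ℕ) : ℝ≥0∞) := by
      funext ω; rw [ENNReal.ofReal_natCast]
    rw [he, ← lintegral_add_compl (fun ω => ((tau L ω : ℕ) : ℝ≥0∞)) (measurableSet_A L),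
      hlin, htsumU]
    have : ν.restrict (A L)ᶜ = 0 := Measure.restrict_eq_zero.2 hAc_null
    rw [this, lintegral_zero_measure, add_zero]
  have hg_int : Integrable (fun ω => ((tau L ω : ℕ) : ℝ)) ν := by
    refine ⟨hg_meas.aestronglyMeasurable, ?_⟩
    rw [hasFiniteIntegral_iff_ofReal (Eventually.of_forall (fun ω => by positivity))]
    rw [hg_lint]
    exact ENNReal.ofReal_lt_top
  -- dominated convergence
  have hDCT : Tendsto (fun n => ∫ ω, ((V L n ω : ℤ) : ℝ) ∂ν) atTop (𝓝 (L : ℝ)) := by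
    have h := tendsto_integral_of_dominated_convergence (μ := ν)
      (F := fun n ω => ((V L n ω : ℤ) : ℝ)) (f := fun _ => (L : ℝ))
      (bound := fun ω => ((tau L ω : ℕ) : ℝ))
      (fun n => ((Measurable.of_discrete (f := fun z : ℤ => (z:ℝ))).comp
        (measurable_V L n)).aestronglyMeasurable)
      hg_int
      (fun n => by
        filter_upwards [hAe] with ω hA
        rw [Real.norm_eq_abs]
        have := abs_V_le_tau hA n
        calc |((V L n ω : ℤ) : ℝ)| = ((|V L n ω| : ℤ) : ℝ) := by
              rw [Int.cast_abs]
          _ ≤ ((tau L ω : ℕ) : ℝ) := by exact_mod_cast this)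
      (by
        filter_upwards [hAe] with ω hA
        apply tendsto_atTop_of_eventually_const (i₀ := tau L ω)
        intro n hn
        rw [V_eventually_eq hA hn]
        push_cast
        rfl)
    have hconst : ∫ _ω, (L : ℝ) ∂ν = (L : ℝ) := by
      rw [integral_const]
      simp
    rwa [hconst] at h
  have htendsto1 : Tendsto (fun n => ∫ ω, ((V L n ω : ℤ) : ℝ) ∂ν) atTop
      (𝓝 ((2*p-1) * U)) := by
    have : (fun n => ∫ ω, ((V L n ω : ℤ) : ℝ) ∂ν)
        = fun n => (2*p-1) * ∑ i ∈ range n, ub i := by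
      funext n; exact hIVn n
    rw [this]
    exact (hSummable.hasSum.tendsto_sum_nat).const_mul _
  have hUL : (2*p-1) * U = L := tendsto_nhds_unique htendsto1 hDCT
  have hUval : U = L / (2*p-1) := by
    field_simp at hUL ⊢
    linarith
  refine ⟨hA1, ?_⟩
  rw [hlin, htsumU, hUval]


end Wald

section Assembly

/-- the coordinatewise flip map -/
def flip' : Ω → Ω := fun ω i => !(ω i)

lemma measurable_flip' : Measurable flip' := by
  apply measurable_pi_lambda
  intro i
  exact Measurable.of_discrete.comp (measurable_pi_apply i)

lemma measurableSet_finite_cyl (s : Finset ℕ) (f : ℕ → Bool) :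
    MeasurableSet {ω : Ω | ∀ i ∈ s, ω i = f i} := by
  have : {ω : Ω | ∀ i ∈ s, ω i = f i} = ⋂ i ∈ (s : Set ℕ), {ω : Ω | ω i = f i} := by
    ext ω; simp
  rw [this]
  exact MeasurableSet.biInter (s.countable_toSet) (fun i _ => measurableSet_coord i (f i))

lemma cylMeasure_map_flip {μ : Measure Ω} {a b : ℝ≥0∞}
    (hμ : CylMeasure μ (fun x => if x then a else b)) :
    CylMeasure (μ.map flip') (fun x => if x then b else a) := by
  intro s f
  rw [Measure.map_apply measurable_flip' (measurableSet_finite_cyl s f)]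
  have hpre : flip' ⁻¹' {ω : Ω | ∀ i ∈ s, ω i = f i} = {ω : Ω | ∀ i ∈ s, ω i = !(f i)} := by
    ext ω
    simp only [Set.mem_preimage, Set.mem_setOf_eq, flip']
    constructor
    · intro h i hi; have := h i hi; cases hf : f i <;> cases hw : ω i <;> simp_all
    · intro h i hi; have := h i hi; cases hf : f i <;> cases hw : ω i <;> simp_all
  rw [hpre, hμ s (fun i => !(f i))]
  apply Finset.prod_congr rfl
  intro i _
  cases f i <;> simp

theorem main_result (q : ℝ) (hq0 : 0 < q) (hq : q < 1 / 2)
    (L : ℕ) (hL : 0 < L)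
    (μ : Measure Ω) [IsProbabilityMeasure μ]
    (hμ : CylMeasure μ (fun x => if x then ENNReal.ofReal q else ENNReal.ofReal (1 - q))) :
    (∫ ω in A L, (tau L ω : ℝ) ∂μ) / (μ (A L)).toReal = L / (1 - 2 * q) := by
  classical
  set μ' : Measure Ω := μ.map flip' with hμ'def
  have _ : IsProbabilityMeasure μ' := Measure.isProbabilityMeasure_map measurable_flip'.aemeasurable
  have hμ' : CylMeasure μ' (fun x => if x then ENNReal.ofReal (1-q) else ENNReal.ofReal q) :=
    cylMeasure_map_flip hμ
  have hμ'' : CylMeasure μ' (fun x => if x then ENNReal.ofReal (1-q) else ENNReal.ofReal (1-(1-q))) := by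
    have : 1 - (1 - q) = q := by ring
    rw [this]
    exact hμ'
  have hw := wald_main (p := 1-q) (by linarith) (by linarith) hμ'' hL
  have hA'1 : μ' (A L) = 1 := hw.1
  have hK : ∫⁻ ω in A L, (tau L ω : ℝ≥0∞) ∂μ' = ENNReal.ofReal (L / (1 - 2*q)) := by
    have : 2*(1-q) - 1 = 1 - 2*q := by ring
    rw [hw.2, this]
  -- decomposition of A into tau level sets
  have hAU : A L = ⋃ n : ℕ, {ω : Ω | tau L ω = n+1} := by
    ext ω
    simp only [Set.mem_iUnion, Set.mem_setOf_eq]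
    constructor
    · intro h
      have := tau_pos hL h
      exact ⟨tau L ω - 1, by omega⟩
    · rintro ⟨n, hn⟩
      exact mem_A_of_tau_pos (by omega)
  have hdisj : Pairwise (Function.onFun Disjoint (fun n => {ω : Ω | tau L ω = n+1})) := by
    intro n m hnm
    simp only [Function.onFun]
    rw [Set.disjoint_left]
    intro ω h1 h2
    simp only [Set.mem_setOf_eq] at h1 h2
    omega
  have hmeas : ∀ n : ℕ, MeasurableSet {ω : Ω | tau L ω = n+1} :=
    fun n => measurableSet_tau_eq L (n+1) hL n.succ_pos
  have hsum_A : ∀ ν : Measure Ω, ν (A L) = ∑' n, ν {ω | tau L ω = n+1} := by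
    intro ν
    rw [hAU, measure_iUnion hdisj hmeas]
  have hsum_int : ∀ ν : Measure Ω, ∫⁻ ω in A L, (tau L ω : ℝ≥0∞) ∂ν
      = ∑' n, (((n:ℕ)+1 : ℕ) : ℝ≥0∞) * ν {ω | tau L ω = n+1} := by
    intro ν
    rw [hAU, lintegral_iUnion hmeas hdisj]
    apply tsum_congr
    intro n
    rw [setLIntegral_congr_fun (hmeas n)
      (fun ω (hω : tau L ω = n+1) => by rw [hω]),
      setLIntegral_const]
  set a : ℝ≥0∞ := ENNReal.ofReal q with ha
  set b : ℝ≥0∞ := ENNReal.ofReal (1-q) with hb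
  have htilt : ∀ n : ℕ, b^L * μ {ω | tau L ω = n+1} = a^L * μ' {ω | tau L ω = n+1} := by
    intro n
    apply tilt hμ hμ' L (n+1)
    · intro ω ω' hagree
      exact tau_eq_cylindrical hL (n+1) n.succ_pos ω ω' hagree
    · exact tau_eq_subset hL n.succ_pos
  -- numerator and denominator identities
  set NUM : ℝ≥0∞ := ∫⁻ ω in A L, (tau L ω : ℝ≥0∞) ∂μ with hNUM
  set K : ℝ≥0∞ := ENNReal.ofReal (L / (1 - 2*q)) with hKdef
  have hnum : b^L * NUM = a^L * K := by
    rw [hNUM, hsum_int μ, ← hK, hsum_int μ', ← ENNReal.tsum_mul_left, ← ENNReal.tsum_mul_left]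
    apply tsum_congr
    intro n
    rw [mul_left_comm, htilt n, mul_left_comm]
  have hden : b^L * μ (A L) = a^L := by
    rw [hsum_A μ, ← ENNReal.tsum_mul_left]
    have : ∑' n, b^L * μ {ω | tau L ω = n+1} = ∑' n, a^L * μ' {ω | tau L ω = n+1} :=
      tsum_congr htilt
    rw [this, ENNReal.tsum_mul_left, ← hsum_A μ', hA'1, mul_one]
  -- finiteness and positivity
  have ha0 : a ≠ 0 := by
    rw [ha]; simp [ENNReal.ofReal_eq_zero]; linarith
  have hb0 : b ≠ 0 := by
    rw [hb]; simp [ENNReal.ofReal_eq_zero]; linarith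
  have haT : a ≠ ∞ := ENNReal.ofReal_ne_top
  have hbT : b ≠ ∞ := ENNReal.ofReal_ne_top
  have haL0 : a^L ≠ 0 := pow_ne_zero L ha0
  have hbL0 : b^L ≠ 0 := pow_ne_zero L hb0
  have haLT : a^L ≠ ∞ := ENNReal.pow_ne_top haT
  have hbLT : b^L ≠ ∞ := ENNReal.pow_ne_top hbT
  have hKT : K ≠ ∞ := ENNReal.ofReal_ne_top
  have hNUMT : NUM ≠ ∞ := by
    intro hcon
    rw [hcon, ENNReal.mul_top hbL0] at hnum
    exact (ENNReal.mul_ne_top haLT hKT) hnum.symm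
  -- pass to reals
  have hnumR : (b^L).toReal * NUM.toReal = (a^L).toReal * K.toReal := by
    rw [← ENNReal.toReal_mul, ← ENNReal.toReal_mul, hnum]
  have hdenR : (b^L).toReal * (μ (A L)).toReal = (a^L).toReal := by
    rw [← ENNReal.toReal_mul, hden]
  have hβ : 0 < (b^L).toReal := ENNReal.toReal_pos hbL0 hbLT
  have hα : 0 < (a^L).toReal := ENNReal.toReal_pos haL0 haLT
  have hKr : K.toReal = L / (1 - 2*q) := by
    rw [hKdef, ENNReal.toReal_ofReal (div_nonneg (by positivity) (by linarith))]
  -- Bochner integral equals toReal of lintegral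
  have hBochner : ∫ ω in A L, (tau L ω : ℝ) ∂μ = NUM.toReal := by
    have hmτ : Measurable (fun ω : Ω => (tau L ω : ℝ)) :=
      Measurable.comp (f := tau L) Measurable.of_discrete (measurable_tau L hL)
    rw [integral_eq_lintegral_of_nonneg_ae (Eventually.of_forall (fun ω => by positivity))
      hmτ.aestronglyMeasurable]
    congr 1
    apply lintegral_congr
    intro ω
    exact ENNReal.ofReal_natCast _
  rw [hBochner, ← hKr]
  have hDA : (μ (A L)).toReal = (a^L).toReal / (b^L).toReal := by
    rw [eq_div_iff hβ.ne']
    linear_combination hdenR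
  have hNr : NUM.toReal = (a^L).toReal * K.toReal / (b^L).toReal := by
    rw [eq_div_iff hβ.ne']
    linear_combination hnumR
  rw [hDA, hNr, div_div_div_cancel_right₀ hβ.ne']
  exact mul_div_cancel_left₀ _ hα.ne' 

end Assembly

end GR

/-- **Gambler's ruin conditional expected hitting time.**  Let `μ` be the product
probability measure on `ℕ → Bool` whose coordinates are independent and equal `true`
with probability `q` (cylinder condition `hμ`).  For `0 < q < 1/2` and `L ≥ 1`, the
conditional expectation of `τ_L` given the event `{τ_L < ∞} = {ω | ∃ N, B_N - G_N = L}`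
equals `L/(1-2q)`. -/
theorem gamblers_ruin_expected_hitting_time (q : ℝ) (hq0 : 0 < q) (hq : q < 1 / 2)
    (L : ℕ) (hL : 0 < L)
    (μ : Measure (ℕ → Bool)) [IsProbabilityMeasure μ]
    (hμ : ∀ (s : Finset ℕ) (f : ℕ → Bool),
      μ {ω | ∀ i ∈ s, ω i = f i}
        = ∏ i ∈ s, if f i then ENNReal.ofReal q else ENNReal.ofReal (1 - q)) :
    (∫ ω in {ω | ∃ N, (Bcount ω N : ℤ) - (Gcount ω N : ℤ) = L}, (tau L ω : ℝ) ∂μ)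
        / (μ {ω | ∃ N, (Bcount ω N : ℤ) - (Gcount ω N : ℤ) = L}).toReal
      = L / (1 - 2 * q) := by
  have hcyl : GR.CylMeasure μ (fun x => if x then ENNReal.ofReal q else ENNReal.ofReal (1 - q)) :=
    fun s f => hμ s f
  have := GR.main_result q hq0 hq L hL μ hcyl
  exact this
end

section
/- For 0 < q < 1/2, a positive integer n, and m ∈ ℕ with m < n, the probability under μ_q of the joint event that exactly m trues occur before the n-th false (i.e. the n-th false occurs at position n+m) AND there exists N ≥ n+m with B_N(ω) = G_N(ω) (team B, being n-m behind at the end of Phase I, eventually ties the score) equals C(n+m-1, m) · (1-q)^m · q^n. -/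
open MeasureTheory Finset

open scoped Classical

namespace Catchup

/-! ### Finite boolean strings -/

def bls : ℕ → Finset (List Bool)
  | 0 => {[]}
  | k+1 => ((Finset.univ : Finset Bool) ×ˢ bls k).image fun p => p.1 :: p.2

lemma mem_bls {k : ℕ} {l : List Bool} : l ∈ bls k ↔ l.length = k := by
  induction k generalizing l with
  | zero => simp [bls, List.length_eq_zero_iff]
  | succ k ih =>
    simp only [bls, Finset.mem_image, Finset.mem_product]
    constructor
    · rintro ⟨⟨b, l'⟩, ⟨-, hl'⟩, rfl⟩; simp [ih.mp hl']
    · intro h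
      cases l with
      | nil => simp at h
      | cons b l' => exact ⟨(b, l'), ⟨Finset.mem_univ _, ih.mpr (by simpa using h)⟩, rfl⟩

lemma sum_bls_succ (k : ℕ) (G : List Bool → ℝ) :
    ∑ l ∈ bls (k+1), G l = ∑ b : Bool, ∑ l ∈ bls k, G (b :: l) := by
  rw [bls, Finset.sum_image, ← Finset.sum_product']
  rintro ⟨b, l⟩ - ⟨b', l'⟩ - h
  simp only [List.cons.injEq] at h
  exact Prod.ext h.1 h.2

def pre (b : Bool) (ω : ℕ → Bool) : ℕ → Bool
  | 0 => b
  | i+1 => ω i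

def extL : List Bool → ℕ → Bool
  | [], _ => false
  | b :: _, 0 => b
  | _ :: l, i+1 => extL l i

lemma extL_cons (b : Bool) (l : List Bool) : extL (b :: l) = pre b (extL l) := by
  funext i; cases i <;> rfl

lemma extL_eq_get : ∀ (l : List Bool) (i : ℕ) (h : i < l.length), extL l i = l[i]
  | b :: l, 0, _ => rfl
  | b :: l, i+1, h => extL_eq_get l i (by simpa using h)

lemma bls_inj {L : ℕ} {l l' : List Bool} (hl : l ∈ bls L) (hl' : l' ∈ bls L)
    (h : ∀ i < L, extL l i = extL l' i) : l = l' := by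
  rw [mem_bls] at hl hl'
  apply List.ext_getElem (by omega)
  intro i h1 h2
  rw [← extL_eq_get, ← extL_eq_get]
  exact h i (by omega)

def sft (a : ℕ) (ω : ℕ → Bool) : ℕ → Bool := fun i => ω (a + i)

lemma sft_zero (ω : ℕ → Bool) : sft 0 ω = ω := by
  funext i; simp [sft]

lemma sft_succ_pre (a : ℕ) (b : Bool) (ω : ℕ → Bool) : sft (a+1) (pre b ω) = sft a ω := by
  funext i
  show pre b ω (a + 1 + i) = ω (a + i)
  have : a + 1 + i = (a + i) + 1 := by omega
  rw [this]; rfl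

end Catchup

namespace Catchup

/-! ### Counting lemmas -/

lemma Bcount_congr {ω ω' : ℕ → Bool} {N : ℕ} (h : ∀ i < N, ω i = ω' i) :
    Bcount ω N = Bcount ω' N := by
  unfold Bcount; congr 1
  apply Finset.filter_congr
  intro i hi; simp [h i (Finset.mem_range.mp hi)]

lemma Gcount_congr {ω ω' : ℕ → Bool} {N : ℕ} (h : ∀ i < N, ω i = ω' i) :
    Gcount ω N = Gcount ω' N := by
  unfold Gcount; congr 1
  apply Finset.filter_congr
  intro i hi; simp [h i (Finset.mem_range.mp hi)]

lemma Bcount_zero (ω : ℕ → Bool) : Bcount ω 0 = 0 := rfl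

lemma Gcount_zero (ω : ℕ → Bool) : Gcount ω 0 = 0 := rfl

lemma Bcount_succ (ω : ℕ → Bool) (N : ℕ) :
    Bcount ω (N+1) = Bcount ω N + (if ω N = true then 1 else 0) := by
  unfold Bcount
  rw [Finset.range_add_one, Finset.filter_insert]
  split
  · rw [Finset.card_insert_of_notMem (by simp)]
  · simp

lemma Gcount_succ (ω : ℕ → Bool) (N : ℕ) :
    Gcount ω (N+1) = Gcount ω N + (if ω N = false then 1 else 0) := by
  unfold Gcount
  rw [Finset.range_add_one, Finset.filter_insert]
  split
  · rw [Finset.card_insert_of_notMem (by simp)]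
  · simp

lemma Bcount_add_Gcount (ω : ℕ → Bool) (N : ℕ) : Bcount ω N + Gcount ω N = N := by
  induction N with
  | zero => rfl
  | succ N ih =>
    rw [Bcount_succ, Gcount_succ]
    cases h : ω N <;> simp [h] <;> omega

lemma Bcount_pre_succ (b : Bool) (ω : ℕ → Bool) (j : ℕ) :
    Bcount (pre b ω) (j+1) = (if b = true then 1 else 0) + Bcount ω j := by
  unfold Bcount
  rw [Finset.card_filter, Finset.card_filter, Finset.sum_range_succ']
  simp only [pre]
  rw [add_comm]
  rfl

lemma Gcount_pre_succ (b : Bool) (ω : ℕ → Bool) (j : ℕ) :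
    Gcount (pre b ω) (j+1) = (if b = false then 1 else 0) + Gcount ω j := by
  unfold Gcount
  rw [Finset.card_filter, Finset.card_filter, Finset.sum_range_succ']
  simp only [pre]
  rw [add_comm]
  rfl

lemma Bcount_add (ω : ℕ → Bool) (a j : ℕ) :
    Bcount ω (a + j) = Bcount ω a + Bcount (sft a ω) j := by
  induction j with
  | zero => rfl
  | succ j ih =>
    have : a + (j+1) = (a + j) + 1 := by omega
    rw [this, Bcount_succ, ih, Bcount_succ]
    have : sft a ω j = ω (a + j) := rfl
    rw [this, add_assoc]

lemma Gcount_add (ω : ℕ → Bool) (a j : ℕ) :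
    Gcount ω (a + j) = Gcount ω a + Gcount (sft a ω) j := by
  induction j with
  | zero => rfl
  | succ j ih =>
    have : a + (j+1) = (a + j) + 1 := by omega
    rw [this, Gcount_succ, ih, Gcount_succ]
    have : sft a ω j = ω (a + j) := rfl
    rw [this, add_assoc]

/-! ### The walk and hitting events -/

def X (ω : ℕ → Bool) (j : ℕ) : ℤ := (Bcount ω j : ℤ) - (Gcount ω j : ℤ)

def Hit (ω : ℕ → Bool) (k d : ℕ) : Prop := ∃ j, j ≤ k ∧ X ω j = (d : ℤ)

lemma X_zero (ω : ℕ → Bool) : X ω 0 = 0 := rfl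

lemma X_pre_succ (b : Bool) (ω : ℕ → Bool) (j : ℕ) :
    X (pre b ω) (j+1) = (if b = true then 1 else -1) + X ω j := by
  unfold X
  rw [Bcount_pre_succ, Gcount_pre_succ]
  cases b <;> simp <;> push_cast <;> ring

lemma hit_zero (ω : ℕ → Bool) (k : ℕ) : Hit ω k 0 :=
  ⟨0, Nat.zero_le _, by simp [X_zero]⟩

lemma hit_pre_succ (b : Bool) (ω : ℕ → Bool) (k d : ℕ) :
    Hit (pre b ω) (k+1) (d+1) ↔ Hit ω k (if b = true then d else d+2) := by
  constructor
  · rintro ⟨j, hj, hx⟩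
    cases j with
    | zero => simp [X_zero] at hx; omega
    | succ j =>
      rw [X_pre_succ] at hx
      refine ⟨j, by omega, ?_⟩
      cases b <;> simp at hx ⊢ <;> omega
  · rintro ⟨j, hj, hx⟩
    refine ⟨j+1, by omega, ?_⟩
    rw [X_pre_succ]
    cases b <;> simp at hx ⊢ <;> omega

end Catchup

namespace Catchup

variable (q : ℝ)

/-! ### Weights -/

def W : List Bool → ℝ
  | [] => 1
  | b :: l => (if b = true then q else 1 - q) * W l

lemma W_nonneg (hq0 : 0 < q) (hq : q < 1/2) : ∀ l : List Bool, 0 ≤ W q l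
  | [] => zero_le_one
  | b :: l => mul_nonneg (by cases b <;> simp [W] <;> linarith) (W_nonneg hq0 hq l)

lemma sum_W (hq0 : 0 < q) (hq : q < 1/2) : ∀ k, ∑ l ∈ bls k, W q l = 1
  | 0 => by simp [bls, W]
  | k+1 => by
    rw [sum_bls_succ]
    simp only [W]
    rw [Fintype.sum_bool]
    rw [← Finset.mul_sum, ← Finset.mul_sum, sum_W hq0 hq k]
    simp

/-! ### The recursion `T k d`: probability of hitting `+d` within `k` steps -/

def T : ℕ → ℕ → ℝ
  | 0, 0 => 1
  | 0, _+1 => 0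
  | _+1, 0 => 1
  | k+1, d+1 => q * T k d + (1 - q) * T k (d+2)

lemma T_zero_right : ∀ k, T q k 0 = 1
  | 0 => rfl
  | _+1 => rfl

lemma T_succ_succ (k d : ℕ) : T q (k+1) (d+1) = q * T q k d + (1 - q) * T q k (d+2) := rfl

variable {q}

lemma T_nonneg (hq0 : 0 < q) (hq : q < 1/2) : ∀ k d, 0 ≤ T q k d
  | 0, 0 => zero_le_one
  | 0, _+1 => le_refl 0
  | _+1, 0 => zero_le_one
  | k+1, d+1 => by
    rw [T_succ_succ]
    have h1 := T_nonneg hq0 hq k d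
    have h2 := T_nonneg hq0 hq k (d+2)
    nlinarith

lemma T_le_one (hq0 : 0 < q) (hq : q < 1/2) : ∀ k d, T q k d ≤ 1
  | 0, 0 => le_refl 1
  | 0, _+1 => zero_le_one
  | _+1, 0 => le_refl 1
  | k+1, d+1 => by
    rw [T_succ_succ]
    have h1 := T_le_one hq0 hq k d
    have h2 := T_le_one hq0 hq k (d+2)
    nlinarith

lemma T_mono_succ (hq0 : 0 < q) (hq : q < 1/2) : ∀ k d, T q k d ≤ T q (k+1) d
  | 0, 0 => le_refl 1
  | 0, d+1 => T_nonneg hq0 hq 1 (d+1)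
  | k+1, 0 => le_refl 1
  | k+1, d+1 => by
    rw [T_succ_succ, T_succ_succ]
    have h1 := T_mono_succ hq0 hq k d
    have h2 := T_mono_succ hq0 hq k (d+2)
    nlinarith

lemma T_mono (hq0 : 0 < q) (hq : q < 1/2) (d : ℕ) : Monotone (fun k => T q k d) :=
  monotone_nat_of_le_succ fun k => T_mono_succ hq0 hq k d

lemma hq1 (hq : q < 1/2) : 0 < 1 - q := by linarith

/-- the ratio `r = q/(1-q)` -/
noncomputable def rr : ℝ := q / (1 - q)

lemma rr_pos (hq0 : 0 < q) (hq : q < 1/2) : 0 < rr (q := q) := div_pos hq0 (hq1 hq)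

lemma rr_lt_one (hq0 : 0 < q) (hq : q < 1/2) : rr (q := q) < 1 := by
  rw [rr, div_lt_one (hq1 hq)]; linarith

lemma rr_key (hq0 : 0 < q) (hq : q < 1/2) :
    q + (1 - q) * rr (q := q) ^ 2 = rr (q := q) := by
  have h : (1 : ℝ) - q ≠ 0 := ne_of_gt (hq1 hq)
  rw [rr]; field_simp; ring

lemma T_le_rr (hq0 : 0 < q) (hq : q < 1/2) : ∀ k d, T q k d ≤ rr (q := q) ^ d
  | 0, 0 => le_refl 1
  | 0, d+1 => pow_nonneg (rr_pos hq0 hq).le _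
  | k+1, 0 => le_refl 1
  | k+1, d+1 => by
    rw [T_succ_succ]
    have h1 := T_le_rr hq0 hq k d
    have h2 := T_le_rr hq0 hq k (d+2)
    have key := rr_key hq0 hq
    have : q * T q k d + (1-q) * T q k (d+2) ≤ q * rr (q := q) ^ d + (1-q) * rr (q := q) ^ (d+2) := by
      have := hq1 hq; nlinarith
    refine this.trans (le_of_eq ?_)
    have : rr (q := q) ^ (d+2) = rr (q := q) ^ d * rr (q := q) ^ 2 := by ring
    rw [this]
    have : rr (q := q) ^ (d+1) = rr (q := q) ^ d * rr (q := q) := by ring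
    rw [this]
    nlinarith [pow_nonneg (rr_pos hq0 hq).le d, rr_key hq0 hq]

end Catchup

namespace Catchup

noncomputable def ind (P : Prop) (x : ℝ) : ℝ := if P then x else 0

lemma ind_pos {P : Prop} (h : P) (x : ℝ) : ind P x = x := if_pos h

lemma ind_neg {P : Prop} (h : ¬P) (x : ℝ) : ind P x = 0 := if_neg h

lemma ind_congr {P Q : Prop} (h : P ↔ Q) (x : ℝ) : ind P x = ind Q x :=
  if_congr h rfl rfl

lemma ind_mul (P : Prop) (c x : ℝ) : ind P (c * x) = c * ind P x := by
  unfold ind; split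
  · rfl
  · rw [mul_zero]

lemma ind_nonneg {P : Prop} {x : ℝ} (hx : 0 ≤ x) : 0 ≤ ind P x := by
  unfold ind; split
  · exact hx
  · exact le_refl 0

lemma ind_le {P : Prop} {x : ℝ} (hx : 0 ≤ x) : ind P x ≤ x := by
  unfold ind; split
  · exact le_refl x
  · exact hx

end Catchup

namespace Catchup

variable {q : ℝ}

lemma T_le_of_le (hq0 : 0 < q) (hq : q < 1/2) {k K : ℕ} (h : k ≤ K) (d : ℕ) :
    T q k d ≤ T q K d := T_mono hq0 hq d h

lemma T_sub (hq0 : 0 < q) (hq : q < 1/2) : ∀ k a b, T q k (a + b) ≤ T q k a * T q k b := by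
  intro k
  induction k with
  | zero =>
    intro a b
    match a, b with
    | 0, 0 => simp [T]
    | 0, b+1 => simp [T]
    | a+1, b => have : a + 1 + b = (a+b)+1 := by omega
                rw [this]; simp [T]
  | succ k ih =>
    intro a b
    match a, b with
    | 0, b => rw [Nat.zero_add, T_zero_right, one_mul]
    | a+1, 0 => rw [Nat.add_zero, T_zero_right, mul_one]
    | a+1, b+1 =>
      have e1 : (a+1) + (b+1) = ((a + (b+1)) + 1) := by omega
      rw [e1, T_succ_succ]
      have e2 : a + (b+1) + 2 = (a+2) + (b+1) := by omega
      rw [e2]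
      have h1 := ih a (b+1)
      have h2 := ih (a+2) (b+1)
      have hB := T_nonneg hq0 hq k (b+1)
      have hq1' := hq1 hq
      have step1 : q * T q k (a + (b+1)) + (1-q) * T q k ((a+2)+(b+1))
          ≤ (q * T q k a + (1-q) * T q k (a+2)) * T q k (b+1) := by nlinarith
      refine step1.trans ?_
      rw [← T_succ_succ]
      exact mul_le_mul_of_nonneg_left (T_mono_succ hq0 hq k (b+1))
        (T_nonneg hq0 hq (k+1) (a+1))

lemma T_super (hq0 : 0 < q) (hq : q < 1/2) : ∀ j k a b, T q j a * T q k b ≤ T q (j + k) (a + b) := by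
  intro j
  induction j with
  | zero =>
    intro k a b
    match a with
    | 0 => rw [Nat.zero_add, Nat.zero_add, T_zero_right, one_mul]
    | a+1 => simp [T]; exact T_nonneg hq0 hq _ _
  | succ j ih =>
    intro k a b
    match a with
    | 0 =>
      rw [Nat.zero_add, T_zero_right, one_mul]
      exact T_le_of_le hq0 hq (by omega) b
    | a+1 =>
      have e1 : (j+1) + k = (j+k) + 1 := by omega
      have e2 : (a+1) + b = (a+b) + 1 := by omega
      rw [e1, e2, T_succ_succ, T_succ_succ]
      have e3 : a + b + 2 = (a+2) + b := by omega
      rw [e3]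
      have h1 := ih k a b
      have h2 := ih k (a+2) b
      have hq1' := hq1 hq
      nlinarith [T_nonneg hq0 hq k b]

/-! ### The limit `θ d = sup_k T k d` -/

noncomputable def th (q : ℝ) (d : ℕ) : ℝ := ⨆ k, T q k d

lemma bddAbove_T (hq0 : 0 < q) (hq : q < 1/2) (d : ℕ) :
    BddAbove (Set.range fun k => T q k d) := by
  refine ⟨1, ?_⟩
  rintro x ⟨k, rfl⟩
  exact T_le_one hq0 hq k d

lemma T_le_th (hq0 : 0 < q) (hq : q < 1/2) (k d : ℕ) : T q k d ≤ th q d :=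
  le_ciSup (bddAbove_T hq0 hq d) k

lemma th_le (hq0 : 0 < q) (hq : q < 1/2) {d : ℕ} {c : ℝ} (h : ∀ k, T q k d ≤ c) :
    th q d ≤ c := ciSup_le h

lemma tendsto_th (hq0 : 0 < q) (hq : q < 1/2) (d : ℕ) :
    Filter.Tendsto (fun k => T q k d) Filter.atTop (nhds (th q d)) :=
  tendsto_atTop_ciSup (T_mono hq0 hq d) (bddAbove_T hq0 hq d)

lemma th_one_eq (hq0 : 0 < q) (hq : q < 1/2) : th q 1 = q + (1 - q) * th q 2 := by
  have h1 : Filter.Tendsto (fun k => T q (k+1) 1) Filter.atTop (nhds (th q 1)) :=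
    (tendsto_th hq0 hq 1).comp (Filter.tendsto_add_atTop_nat 1)
  have h2 : Filter.Tendsto (fun k => T q (k+1) 1) Filter.atTop (nhds (q + (1 - q) * th q 2)) := by
    have : (fun k => T q (k+1) 1) = fun k => q + (1 - q) * T q k 2 := by
      funext k
      rw [show (1 : ℕ) = 0 + 1 from rfl, T_succ_succ, T_zero_right, mul_one]
    rw [this]
    exact (tendsto_const_nhds.add (((tendsto_th hq0 hq 2)).const_mul _))
  exact tendsto_nhds_unique h1 h2

lemma th_two_eq (hq0 : 0 < q) (hq : q < 1/2) : th q 2 = th q 1 * th q 1 := by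
  apply le_antisymm
  · refine le_of_tendsto_of_tendsto' (tendsto_th hq0 hq 2)
      ((tendsto_th hq0 hq 1).mul (tendsto_th hq0 hq 1)) ?_
    intro k
    exact T_sub hq0 hq k 1 1
  · refine le_of_tendsto' ((tendsto_th hq0 hq 1).mul (tendsto_th hq0 hq 1)) ?_
    intro k
    calc T q k 1 * T q k 1 ≤ T q (k + k) (1 + 1) := T_super hq0 hq k k 1 1
      _ ≤ th q 2 := T_le_th hq0 hq _ 2

lemma th_one (hq0 : 0 < q) (hq : q < 1/2) : th q 1 = rr (q := q) := by
  have hle : th q 1 ≤ rr (q := q) := th_le hq0 hq (fun k => by simpa using T_le_rr hq0 hq k 1)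
  have h1 := th_one_eq hq0 hq
  rw [th_two_eq hq0 hq] at h1
  have hfac : ((1 - q) * th q 1 - q) * (th q 1 - 1) = 0 := by linear_combination -h1
  rcases mul_eq_zero.mp hfac with h | h
  · have : (1 - q) * th q 1 = q := by linarith
    rw [rr, eq_div_iff (ne_of_gt (hq1 hq))]
    linarith
  · exfalso
    have := rr_lt_one hq0 hq
    linarith

lemma th_eq (hq0 : 0 < q) (hq : q < 1/2) (d : ℕ) : th q d = rr (q := q) ^ d := by
  induction d with
  | zero =>
    simp only [pow_zero]
    apply le_antisymm (th_le hq0 hq fun k => T_le_one hq0 hq k 0)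
    simpa [T_zero_right] using T_le_th hq0 hq 0 0
  | succ d ih =>
    apply le_antisymm (th_le hq0 hq fun k => T_le_rr hq0 hq k (d+1))
    have key : th q d * th q 1 ≤ th q (d+1) := by
      have step1 : ∀ k, th q d * T q k 1 ≤ th q (d+1) := by
        intro k
        refine le_of_tendsto ((tendsto_th hq0 hq d).mul_const _) ?_
        filter_upwards with j
        calc T q j d * T q k 1 ≤ T q (j+k) (d+1) := T_super hq0 hq j k d 1
          _ ≤ th q (d+1) := T_le_th hq0 hq _ _
      refine le_of_tendsto (((tendsto_th hq0 hq 1)).const_mul _) ?_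
      filter_upwards with k using step1 k
    calc rr (q := q) ^ (d+1) = rr (q := q) ^ d * rr (q := q) := by ring
      _ = th q d * th q 1 := by rw [ih, th_one hq0 hq]
      _ ≤ th q (d+1) := key

end Catchup

namespace Catchup

variable {q : ℝ}

/-! ### Sum over strings of hitting events equals `T` -/

lemma S_eq_T (hq0 : 0 < q) (hq : q < 1/2) :
    ∀ k d, (∑ l ∈ bls k, ind (Hit (extL l) k d) (W q l)) = T q k d := by
  intro k
  induction k with
  | zero =>
    intro d
    have h : Hit (extL []) 0 d ↔ d = 0 := by
      constructor
      · rintro ⟨j, hj, hx⟩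
        interval_cases j
        rw [X_zero] at hx
        exact_mod_cast hx.symm
      · rintro rfl; exact hit_zero _ _
    rw [show bls 0 = {[]} from rfl, Finset.sum_singleton, ind_congr h]
    match d with
    | 0 => rw [ind_pos rfl]; rfl
    | d+1 => rw [ind_neg (by omega)]; rfl
  | succ k ih =>
    intro d
    rw [sum_bls_succ]
    have hterm : ∀ (b : Bool) (l : List Bool),
        ind (Hit (extL (b :: l)) (k+1) d) (W q (b :: l))
        = (if b = true then q else 1 - q) * ind (Hit (pre b (extL l)) (k+1) d) (W q l) := by
      intro b l
      rw [extL_cons, show W q (b :: l) = (if b = true then q else 1-q) * W q l from rfl,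
        ind_mul]
    simp only [hterm]
    match d with
    | 0 =>
      have h0 : ∀ (b : Bool) (l : List Bool),
          ind (Hit (pre b (extL l)) (k+1) 0) (W q l) = W q l :=
        fun b l => ind_pos (hit_zero _ _) _
      simp only [h0]
      rw [Fintype.sum_bool, ← Finset.mul_sum, ← Finset.mul_sum, sum_W q hq0 hq k,
        T_zero_right]
      simp
    | d+1 =>
      have hsplit : ∀ (b : Bool) (l : List Bool),
          ind (Hit (pre b (extL l)) (k+1) (d+1)) (W q l)
          = ind (Hit (extL l) k (if b = true then d else d+2)) (W q l) :=
        fun b l => ind_congr (hit_pre_succ b (extL l) k d) _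
      simp only [hsplit]
      rw [Fintype.sum_bool]
      have e1 : ((true : Bool) = true) = True := by simp
      have e2 : ((false : Bool) = true) = False := by simp
      simp only [e1, e2, if_true, if_false]
      rw [← Finset.mul_sum, ← Finset.mul_sum, ih d, ih (d+2), T_succ_succ]

/-! ### Predicates depending on finitely many coordinates; factorization -/

def DOn (a : ℕ) (P : (ℕ → Bool) → Prop) : Prop :=
  ∀ ω ω', (∀ i < a, ω i = ω' i) → (P ω ↔ P ω')

lemma don_pre {a : ℕ} {P : (ℕ → Bool) → Prop} (h : DOn (a+1) P) (b : Bool) :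
    DOn a (fun ω => P (pre b ω)) := by
  intro ω ω' hag
  apply h
  intro i hi
  cases i with
  | zero => rfl
  | succ i => exact hag i (by omega)

lemma fact_mul (hq0 : 0 < q) (hq : q < 1/2) (k : ℕ) (P₂ : (ℕ → Bool) → Prop) :
    ∀ (a : ℕ) (P₁ : (ℕ → Bool) → Prop), DOn a P₁ →
    (∑ l ∈ bls (a + k), ind (P₁ (extL l) ∧ P₂ (sft a (extL l))) (W q l))
      = (∑ l ∈ bls a, ind (P₁ (extL l)) (W q l))
        * (∑ l ∈ bls k, ind (P₂ (extL l)) (W q l)) := by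
  intro a
  induction a with
  | zero =>
    intro P₁ h₁
    rw [Nat.zero_add]
    have hP : ∀ l : List Bool, P₁ (extL l) ↔ P₁ (extL []) := by
      intro l
      exact h₁ _ _ (by omega)
    have hsing : (∑ l ∈ bls 0, ind (P₁ (extL l)) (W q l)) = ind (P₁ (extL [])) 1 := by
      rw [show bls 0 = {[]} from rfl, Finset.sum_singleton]; rfl
    rw [hsing]
    by_cases h : P₁ (extL [])
    · rw [ind_pos h, one_mul]
      refine Finset.sum_congr rfl fun l _ => ?_
      rw [sft_zero]
      exact ind_congr (by rw [hP l]; simp [h]) _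
    · rw [ind_neg h, zero_mul]
      refine Finset.sum_eq_zero fun l _ => ?_
      exact ind_neg (fun hc => h ((hP l).mp hc.1)) _
  | succ a ih =>
    intro P₁ h₁
    have e : (a + 1) + k = (a + k) + 1 := by omega
    rw [e, sum_bls_succ]
    have hterm : ∀ (b : Bool) (l : List Bool),
        ind (P₁ (extL (b :: l)) ∧ P₂ (sft (a+1) (extL (b :: l)))) (W q (b :: l))
        = (if b = true then q else 1 - q) *
            ind (P₁ (pre b (extL l)) ∧ P₂ (sft a (extL l))) (W q l) := by
      intro b l
      rw [extL_cons, sft_succ_pre, show W q (b :: l) = (if b = true then q else 1-q) * W q l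
        from rfl, ind_mul]
    have hib : ∀ b : Bool,
        (∑ l ∈ bls (a + k), ind (P₁ (pre b (extL l)) ∧ P₂ (sft a (extL l))) (W q l))
        = (∑ l ∈ bls a, ind (P₁ (pre b (extL l))) (W q l))
          * (∑ l ∈ bls k, ind (P₂ (extL l)) (W q l)) :=
      fun b => ih (fun ω => P₁ (pre b ω)) (don_pre h₁ b)
    have hterm2 : ∀ (b : Bool) (l : List Bool),
        ind (P₁ (extL (b :: l))) (W q (b :: l))
        = (if b = true then q else 1 - q) * ind (P₁ (pre b (extL l))) (W q l) := by
      intro b l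
      rw [extL_cons, show W q (b :: l) = (if b = true then q else 1-q) * W q l from rfl,
        ind_mul]
    simp only [hterm]
    rw [Fintype.sum_bool, ← Finset.mul_sum, ← Finset.mul_sum, hib true, hib false]
    rw [sum_bls_succ a (fun l => ind (P₁ (extL l)) (W q l))]
    simp only [hterm2]
    rw [Fintype.sum_bool, ← Finset.mul_sum, ← Finset.mul_sum]
    ring

/-! ### Binomial sums -/

lemma sum_binom (hq0 : 0 < q) (hq : q < 1/2) :
    ∀ L j, (∑ l ∈ bls L, ind (Gcount (extL l) L = j) (W q l))
      = (L.choose j : ℝ) * (1 - q) ^ j * q ^ (L - j) := by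
  intro L
  induction L with
  | zero =>
    intro j
    rw [show bls 0 = {[]} from rfl, Finset.sum_singleton]
    match j with
    | 0 => rw [ind_pos (Gcount_zero (extL []))]; simp [W]
    | j+1 => rw [ind_neg (by rw [Gcount_zero]; omega)]; simp
  | succ L ih =>
    intro j
    rw [sum_bls_succ]
    have hterm : ∀ (b : Bool) (l : List Bool),
        ind (Gcount (extL (b :: l)) (L+1) = j) (W q (b :: l))
        = (if b = true then q else 1 - q) *
            ind ((if b = false then 1 else 0) + Gcount (extL l) L = j) (W q l) := by
      intro b l
      rw [extL_cons, show W q (b :: l) = (if b = true then q else 1-q) * W q l from rfl,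
        ind_mul, ind_congr (by rw [Gcount_pre_succ]) (W q l)]
    simp only [hterm]
    rw [Fintype.sum_bool]
    have e1 : ((true : Bool) = true) = True := by simp
    have e2 : ((false : Bool) = true) = False := by simp
    have e3 : ((true : Bool) = false) = False := by simp
    have e4 : ((false : Bool) = false) = True := by simp
    simp only [e1, e2, e3, e4, if_true, if_false]
    match j with
    | 0 =>
      have h1 : ∀ l : List Bool, ind (1 + Gcount (extL l) L = 0) (W q l) = 0 :=
        fun l => ind_neg (by omega) _
      have h0 : ∀ l : List Bool, ind (0 + Gcount (extL l) L = 0) (W q l)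
          = ind (Gcount (extL l) L = 0) (W q l) :=
        fun l => ind_congr (by omega) _
      simp only [h1, h0, Finset.sum_const_zero, mul_zero, add_zero]
      rw [← Finset.mul_sum, ih 0]
      simp [pow_succ]
      ring
    | j+1 =>
      have h1 : ∀ l : List Bool, ind (1 + Gcount (extL l) L = j+1) (W q l)
          = ind (Gcount (extL l) L = j) (W q l) := fun l => ind_congr (by omega) _
      have h0 : ∀ l : List Bool, ind (0 + Gcount (extL l) L = j+1) (W q l)
          = ind (Gcount (extL l) L = j+1) (W q l) := fun l => ind_congr (by omega) _
      simp only [h1, h0]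
      rw [← Finset.mul_sum, ← Finset.mul_sum, ih (j+1), ih j]
      rcases lt_trichotomy j L with hjL | rfl | hjL
      · rw [Nat.choose_succ_succ]
        push_cast
        rw [show L - j = (L - (j+1)) + 1 from by omega, pow_succ]
        ring
      · rw [Nat.choose_succ_succ, Nat.choose_self, Nat.choose_succ_self]
        rw [show (j+1) - (j+1) = 0 from by omega, show j - j = 0 from by omega,
          show j - (j+1) = 0 from by omega]
        push_cast
        ring
      · rw [Nat.choose_eq_zero_of_lt hjL, Nat.choose_eq_zero_of_lt (by omega),
          Nat.choose_eq_zero_of_lt (by omega)]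
        push_cast
        ring

end Catchup

namespace Catchup

variable {q : ℝ}

lemma exists_bls : ∀ (ω : ℕ → Bool) (L : ℕ), ∃ l ∈ bls L, ∀ i < L, extL l i = ω i := by
  intro ω L
  induction L generalizing ω with
  | zero => exact ⟨[], by simp [bls], by omega⟩
  | succ L ih =>
    obtain ⟨l, hl, hag⟩ := ih (fun i => ω (i+1))
    refine ⟨ω 0 :: l, ?_, ?_⟩
    · rw [mem_bls]; simp [mem_bls.mp hl]
    · intro i hi
      cases i with
      | zero => rfl
      | succ i => exact hag i (by omega)

lemma prod_W (hq0 : 0 < q) (hq : q < 1/2) : ∀ l : List Bool,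
    (∏ i ∈ Finset.range l.length,
        if extL l i then ENNReal.ofReal q else ENNReal.ofReal (1-q))
      = ENNReal.ofReal (W q l) := by
  intro l
  induction l with
  | nil => simp [W]
  | cons b l ih =>
    rw [List.length_cons, Finset.prod_range_succ']
    have h1 : ∀ i : ℕ, extL (b::l) (i+1) = extL l i := fun i => rfl
    simp only [h1]
    rw [ih]
    have h0 : extL (b :: l) 0 = b := rfl
    rw [h0]
    rw [show W q (b :: l) = (if b = true then q else 1-q) * W q l from rfl]
    rw [ENNReal.ofReal_mul (by cases b <;> simp <;> linarith)]
    cases b <;> simp [mul_comm]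

lemma cyl_measurable (L : ℕ) (f : ℕ → Bool) :
    MeasurableSet {ω : ℕ → Bool | ∀ i ∈ Finset.range L, ω i = f i} := by
  have : {ω : ℕ → Bool | ∀ i ∈ Finset.range L, ω i = f i}
      = ⋂ i ∈ Finset.range L, ((fun ω : ℕ → Bool => ω i) ⁻¹' {f i}) := by
    ext ω; simp [Set.mem_iInter]
  rw [this]
  exact MeasurableSet.biInter (Finset.range L).countable_toSet
    (fun i _ => measurable_pi_apply i (measurableSet_singleton (f i)))

lemma measure_event (hq0 : 0 < q) (hq : q < 1/2)
    (μ : Measure (ℕ → Bool))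
    (hμ : ∀ (s : Finset ℕ) (f : ℕ → Bool),
      μ {ω | ∀ i ∈ s, ω i = f i}
        = ∏ i ∈ s, if f i then ENNReal.ofReal q else ENNReal.ofReal (1 - q))
    (L : ℕ) (P : (ℕ → Bool) → Prop) (hP : DOn L P) :
    μ {ω | P ω} = ENNReal.ofReal (∑ l ∈ bls L, ind (P (extL l)) (W q l)) := by
  classical
  have hset : {ω | P ω} = ⋃ l ∈ (bls L).filter (fun l => P (extL l)),
      {ω : ℕ → Bool | ∀ i ∈ Finset.range L, ω i = extL l i} := by
    ext ω
    simp only [Set.mem_setOf_eq, Set.mem_iUnion, Finset.mem_filter, Finset.mem_range,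
      exists_prop]
    constructor
    · intro hω
      obtain ⟨l, hl, hag⟩ := exists_bls ω L
      refine ⟨l, ⟨hl, (hP (extL l) ω (fun i hi => hag i hi)).mpr hω⟩,
        fun i hi => (hag i hi).symm⟩
    · rintro ⟨l, ⟨hl, hPl⟩, hag⟩
      exact (hP (extL l) ω (fun i hi => (hag i hi).symm)).mp hPl
  rw [hset, measure_biUnion_finset]
  rotate_left
  · intro l hl l' hl' hne
    simp only [Finset.coe_filter, Set.mem_setOf_eq] at hl hl'
    refine Set.disjoint_left.mpr fun ω hω hω' => hne ?_
    exact bls_inj hl.1 hl'.1 (fun i hi => by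
      rw [← hω i (Finset.mem_range.mpr hi), ← hω' i (Finset.mem_range.mpr hi)])
  · exact fun l _ => cyl_measurable L (extL l)
  · rw [Finset.sum_filter]
    have hterm : ∀ l ∈ bls L,
        (if P (extL l) then μ {ω : ℕ → Bool | ∀ i ∈ Finset.range L, ω i = extL l i} else 0)
        = ENNReal.ofReal (ind (P (extL l)) (W q l)) := by
      intro l hl
      rw [hμ (Finset.range L) (extL l)]
      rw [show Finset.range L = Finset.range l.length from by rw [mem_bls.mp hl]]
      rw [prod_W hq0 hq l]
      by_cases h : P (extL l)
      · rw [if_pos h, ind_pos h]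
      · rw [if_neg h, ind_neg h, ENNReal.ofReal_zero]
    rw [Finset.sum_congr rfl hterm]
    rw [← ENNReal.ofReal_sum_of_nonneg]
    intro l hl
    exact ind_nonneg (W_nonneg q hq0 hq l)

end Catchup


open Catchup

/-- Let `μ` be the product probability measure on `ℕ → Bool` whose coordinates are
independent and equal `true` with probability `q` (cylinder condition `hμ`).  For
`0 < q < 1/2`, `n ≥ 1` and `m < n`, the probability that exactly `m` `true`s occur before
the `n`-th `false` (so the `n`-th `false` is at position `n+m`) AND team B, being `n-m`
behind at the end of Phase I, eventually ties the score (`∃ N ≥ n+m, B_N = G_N`) equals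
`C(n+m-1, m) (1-q)^m q^n`. -/
theorem prob_phaseI_m_and_catchup (q : ℝ) (hq0 : 0 < q) (hq : q < 1 / 2)
    (n : ℕ) (hn : 0 < n) (m : ℕ) (hm : m < n)
    (μ : Measure (ℕ → Bool)) [IsProbabilityMeasure μ]
    (hμ : ∀ (s : Finset ℕ) (f : ℕ → Bool),
      μ {ω | ∀ i ∈ s, ω i = f i}
        = ∏ i ∈ s, if f i then ENNReal.ofReal q else ENNReal.ofReal (1 - q)) :
    μ {ω | (Gcount ω (n + m) = n ∧ ω (n + m - 1) = false)
           ∧ ∃ N, n + m ≤ N ∧ Bcount ω N = Gcount ω N}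
      = ENNReal.ofReal (((n + m - 1).choose m : ℝ) * (1 - q) ^ m * q ^ n) := by
  classical
  set Apred : (ℕ → Bool) → Prop :=
    fun ω => Gcount ω (n + m) = n ∧ ω (n + m - 1) = false with hApred
  set Ek : ℕ → Set (ℕ → Bool) := fun k =>
    {ω | Apred ω ∧ ∃ N, N ≤ n + m + k ∧ n + m ≤ N ∧ Bcount ω N = Gcount ω N} with hEk
  -- the target event is the increasing union of the Ek
  have hE : {ω | (Gcount ω (n + m) = n ∧ ω (n + m - 1) = false)
           ∧ ∃ N, n + m ≤ N ∧ Bcount ω N = Gcount ω N} = ⋃ k, Ek k := by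
    ext ω
    simp only [hEk, Set.mem_setOf_eq, Set.mem_iUnion]
    constructor
    · rintro ⟨hA, N, hN1, hN2⟩
      exact ⟨N - (n + m), hA, N, by omega, hN1, hN2⟩
    · rintro ⟨k, hA, N, _, hN1, hN2⟩
      exact ⟨hA, N, hN1, hN2⟩
  have hmono : Monotone Ek := by
    intro k k' hk ω hω
    obtain ⟨hA, N, h1, h2, h3⟩ := hω
    exact ⟨hA, N, by omega, h2, h3⟩
  -- each Ek only depends on the first n+m+k coordinates
  have hDOnA : DOn (n + m) Apred := by
    intro ω ω' hag
    constructor <;> rintro ⟨h1, h2⟩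
    · exact ⟨by rw [← Gcount_congr hag]; exact h1, by rw [← hag (n+m-1) (by omega)]; exact h2⟩
    · exact ⟨by rw [Gcount_congr hag]; exact h1, by rw [hag (n+m-1) (by omega)]; exact h2⟩
  have hDOnE : ∀ k, DOn (n + m + k)
      (fun ω => Apred ω ∧ ∃ N, N ≤ n + m + k ∧ n + m ≤ N ∧ Bcount ω N = Gcount ω N) := by
    intro k ω ω' hag
    have hagA : ∀ i < n + m, ω i = ω' i := fun i hi => hag i (by omega)
    have hcnt : ∀ N ≤ n + m + k, Bcount ω N = Bcount ω' N ∧ Gcount ω N = Gcount ω' N :=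
      fun N hN => ⟨Bcount_congr (fun i hi => hag i (by omega)),
        Gcount_congr (fun i hi => hag i (by omega))⟩
    constructor <;> rintro ⟨h1, N, hn1, hn2, hn3⟩
    · exact ⟨(hDOnA ω ω' hagA).mp h1, N, hn1, hn2,
        by rw [← (hcnt N hn1).1, ← (hcnt N hn1).2]; exact hn3⟩
    · exact ⟨(hDOnA ω ω' hagA).mpr h1, N, hn1, hn2,
        by rw [(hcnt N hn1).1, (hcnt N hn1).2]; exact hn3⟩
  -- reformulate the catch-up condition as a hitting event of the shifted walk
  have hcond : ∀ (k : ℕ) (ω : ℕ → Bool),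
      (Apred ω ∧ ∃ N, N ≤ n + m + k ∧ n + m ≤ N ∧ Bcount ω N = Gcount ω N)
      ↔ (Apred ω ∧ Hit (sft (n + m) ω) k (n - m)) := by
    intro k ω
    constructor
    · rintro ⟨hA, N, h1, h2, h3⟩
      refine ⟨hA, N - (n + m), by omega, ?_⟩
      have hBm : Bcount ω (n + m) = m := by
        have h5 := Bcount_add_Gcount ω (n + m)
        have h6 := hA.1
        omega
      have hsB := Bcount_add ω (n + m) (N - (n + m))
      have hsG := Gcount_add ω (n + m) (N - (n + m))
      rw [show n + m + (N - (n + m)) = N from by omega] at hsB hsG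
      unfold X
      have h6 := hA.1
      omega
    · rintro ⟨hA, j, hj, hX⟩
      refine ⟨hA, n + m + j, by omega, by omega, ?_⟩
      have hBm : Bcount ω (n + m) = m := by
        have h5 := Bcount_add_Gcount ω (n + m)
        have h6 := hA.1
        omega
      have hsB := Bcount_add ω (n + m) j
      have hsG := Gcount_add ω (n + m) j
      unfold X at hX
      have h6 := hA.1
      omega
  -- the measure of Ek
  set PA : ℝ := ∑ l ∈ bls (n + m), ind (Apred (extL l)) (W q l) with hPAdef
  have hmeasEk : ∀ k, μ (Ek k) = ENNReal.ofReal (PA * T q k (n - m)) := by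
    intro k
    rw [hEk]
    rw [measure_event hq0 hq μ hμ (n + m + k) _ (hDOnE k)]
    congr 1
    have step1 : (∑ l ∈ bls (n + m + k),
        ind (Apred (extL l) ∧ ∃ N, N ≤ n + m + k ∧ n + m ≤ N
          ∧ Bcount (extL l) N = Gcount (extL l) N) (W q l))
        = ∑ l ∈ bls (n + m + k),
            ind (Apred (extL l) ∧ Hit (sft (n + m) (extL l)) k (n - m)) (W q l) :=
      Finset.sum_congr rfl fun l _ => ind_congr (hcond k (extL l)) _
    rw [step1, fact_mul hq0 hq k (fun ω => Hit ω k (n - m)) (n + m) Apred hDOnA,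
      S_eq_T hq0 hq k (n - m)]
  -- the value of PA
  have hPA : PA = ((n + m - 1).choose m : ℝ) * (1 - q) ^ n * q ^ m := by
    have hiff : ∀ ω : ℕ → Bool, Apred ω ↔
        (Gcount ω (n + m - 1) = n - 1 ∧ (sft (n + m - 1) ω) 0 = false) := by
      intro ω
      have hgs := Gcount_succ ω (n + m - 1)
      rw [show (n + m - 1) + 1 = n + m from by omega] at hgs
      have hsf : (sft (n + m - 1) ω) 0 = ω (n + m - 1) := by
        show ω (n + m - 1 + 0) = ω (n + m - 1); rw [Nat.add_zero]
      simp only [hApred]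
      rw [hsf]
      constructor
      · rintro ⟨h1, h2⟩
        refine ⟨?_, h2⟩
        rw [h2] at hgs; simp at hgs; omega
      · rintro ⟨h1, h2⟩
        refine ⟨?_, h2⟩
        rw [h2] at hgs; simp at hgs; omega
    have h2 : (∑ l ∈ bls 1, ind (extL l 0 = false) (W q l)) = 1 - q := by
      rw [sum_bls_succ 0 (fun l => ind (extL l 0 = false) (W q l))]
      rw [Fintype.sum_bool, show bls 0 = {[]} from rfl, Finset.sum_singleton,
        Finset.sum_singleton]
      rw [show extL (true :: []) 0 = true from rfl, show extL (false :: []) 0 = false from rfl]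
      rw [ind_neg (by simp), ind_pos rfl]
      show (0 : ℝ) + W q [false] = 1 - q
      rw [show W q [false] = (1 - q) * 1 from rfl]
      ring
    have step1 : PA = ∑ l ∈ bls ((n + m - 1) + 1),
        ind ((Gcount (extL l) (n + m - 1) = n - 1)
          ∧ (sft (n + m - 1) (extL l)) 0 = false) (W q l) := by
      rw [hPAdef, show (n + m - 1) + 1 = n + m from by omega]
      exact Finset.sum_congr rfl fun l _ => ind_congr (hiff (extL l)) _
    rw [step1,
      fact_mul hq0 hq 1 (fun ω => ω 0 = false) (n + m - 1)
        (fun ω => Gcount ω (n + m - 1) = n - 1)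
        (fun ω ω' hag => by
          show Gcount ω (n + m - 1) = n - 1 ↔ Gcount ω' (n + m - 1) = n - 1
          rw [Gcount_congr hag]),
      sum_binom hq0 hq (n + m - 1) (n - 1), h2]
    have hch : (((n + m - 1).choose (n - 1) : ℕ) : ℝ) = (((n + m - 1).choose m : ℕ) : ℝ) := by
      rw [show n - 1 = (n + m - 1) - m from by omega,
        Nat.choose_symm (show m ≤ n + m - 1 from by omega)]
    rw [hch]
    rw [show (n + m - 1) - (n - 1) = m from by omega]
    rw [show (1 - q) ^ n = (1 - q) ^ (n - 1) * (1 - q) from by rw [← pow_succ]; congr 1; omega]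
    ring
  -- pass to the limit
  have hlim1 : Filter.Tendsto (fun k => μ (Ek k)) Filter.atTop (nhds (μ (⋃ k, Ek k))) :=
    MeasureTheory.tendsto_measure_iUnion_atTop hmono
  have hlim2 : Filter.Tendsto (fun k => μ (Ek k)) Filter.atTop
      (nhds (ENNReal.ofReal (PA * rr (q := q) ^ (n - m)))) := by
    simp only [hmeasEk]
    have ht : Filter.Tendsto (fun k => PA * T q k (n - m)) Filter.atTop
        (nhds (PA * rr (q := q) ^ (n - m))) := by
      have h := (tendsto_th hq0 hq (n - m)).const_mul PA
      rwa [th_eq hq0 hq (n - m)] at h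
    exact (ENNReal.continuous_ofReal.tendsto _).comp ht
  have hfinal : μ (⋃ k, Ek k) = ENNReal.ofReal (PA * rr (q := q) ^ (n - m)) :=
    tendsto_nhds_unique hlim1 hlim2
  rw [hE, hfinal, hPA]
  congr 1
  have h1q : (0:ℝ) < 1 - q := by linarith
  have hsplit1 : (1 - q) ^ n = (1 - q) ^ m * (1 - q) ^ (n - m) := by
    rw [← pow_add]; congr 1; omega
  have hsplit2 : q ^ n = q ^ m * q ^ (n - m) := by
    rw [← pow_add]; congr 1; omega
  rw [rr, div_pow, hsplit1, hsplit2]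
  field_simp
end

section
/- For every real q and every integer n ≥ 2, the Rosenfeld polynomials satisfy the second-order linear recurrence R_n(q) = -((4nq² - 4nq - 6q² - n + 6q + 1)/(n-1)) · R_{n-1}(q) + (2q(q-1)(2n-3)/(n-1)) · R_{n-2}(q), with initial conditions R_0(q) = 1 and R_1(q) = 2q. -/
open Finset

/-- The Rosenfeld polynomial `R_n(q)`:
`R_n(q) = 1 - (1-q)^n · Σ_{m=0}^{n-1} C(n+m-1, m) q^m + q^n · Σ_{m=0}^{n-1} C(n+m-1, m) (1-q)^m`. -/
noncomputable def Rosenfeld (n : ℕ) (q : ℝ) : ℝ :=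
  1 - (1 - q) ^ n * ∑ m ∈ range n, ((n + m - 1).choose m : ℝ) * q ^ m
    + q ^ n * ∑ m ∈ range n, ((n + m - 1).choose m : ℝ) * (1 - q) ^ m

/-- The partial sum `S_n(x) = Σ_{m<n} C(n+m-1,m) x^m`. -/
noncomputable def RosenfeldS (n : ℕ) (x : ℝ) : ℝ :=
  ∑ m ∈ range n, ((n + m - 1).choose m : ℝ) * x ^ m

lemma rosenfeld_eq (n : ℕ) (q : ℝ) :
    Rosenfeld n q = 1 - (1 - q) ^ n * RosenfeldS n q + q ^ n * RosenfeldS n (1 - q) := rfl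

/-- Telescoping identity via Pascal's rule:
`(1-x)·S_{n+2}(x) - S_{n+1}(x) = C(2n+1, n+1)·x^{n+1}·(1-2x)`. -/
lemma rosenfeldS_step (n : ℕ) (x : ℝ) :
    (1 - x) * RosenfeldS (n+2) x - RosenfeldS (n+1) x
      = ((2*n+1).choose (n+1) : ℝ) * x ^ (n+1) * (1 - 2*x) := by
  have hS2 : RosenfeldS (n+2) x = ∑ m ∈ range (n+2), ((n+1+m).choose m : ℝ) * x ^ m := by
    unfold RosenfeldS
    refine Finset.sum_congr rfl fun m _ => ?_
    rw [show n + 2 + m - 1 = n + 1 + m from by omega]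
  have hS1 : RosenfeldS (n+1) x = ∑ m ∈ range (n+1), ((n+m).choose m : ℝ) * x ^ m := by
    unfold RosenfeldS
    refine Finset.sum_congr rfl fun m _ => ?_
    rw [show n + 1 + m - 1 = n + m from by omega]
  have hdiff : RosenfeldS (n+2) x - RosenfeldS (n+1) x
      = (∑ i ∈ range n, ((n+1+i).choose i : ℝ) * x ^ (i+1))
        + ((2*n+2).choose (n+1) : ℝ) * x ^ (n+1) := by
    rw [hS2, hS1, Finset.sum_range_succ]
    have key : (∑ m ∈ range (n+1), ((n+1+m).choose m : ℝ) * x ^ m)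
        - (∑ m ∈ range (n+1), ((n+m).choose m : ℝ) * x ^ m)
        = ∑ i ∈ range n, ((n+1+i).choose i : ℝ) * x ^ (i+1) := by
      rw [← Finset.sum_sub_distrib, Finset.sum_range_succ']
      simp only [Nat.add_zero, pow_zero, Nat.choose_zero_right, Nat.cast_one, mul_one,
        sub_self, add_zero]
      refine Finset.sum_congr rfl fun i _ => ?_
      have h1 : (n+1+(i+1)).choose (i+1) = (n+1+i).choose i + (n+1+i).choose (i+1) := by
        rw [show n+1+(i+1) = (n+1+i)+1 from by omega, Nat.choose_succ_succ]
      rw [h1, show n + (i+1) = n + 1 + i from by omega]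
      push_cast
      ring
    rw [show n + 1 + (n+1) = 2*n+2 from by omega]
    linarith [key]
  have hx : x * RosenfeldS (n+2) x
      = (∑ i ∈ range n, ((n+1+i).choose i : ℝ) * x ^ (i+1))
        + ((2*n+1).choose n : ℝ) * x ^ (n+1)
        + ((2*n+2).choose (n+1) : ℝ) * x ^ (n+2) := by
    rw [hS2, Finset.mul_sum, Finset.sum_range_succ, Finset.sum_range_succ]
    rw [show n + 1 + (n+1) = 2*n+2 from by omega, show n + 1 + n = 2*n+1 from by omega]
    have h5 : ∀ i ∈ range n, x * (((n+1+i).choose i : ℝ) * x ^ i)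
        = ((n+1+i).choose i : ℝ) * x ^ (i+1) := fun i _ => by ring
    rw [Finset.sum_congr rfl h5]
    ring
  have hc2 : ((2*n+1).choose n : ℕ) = (2*n+1).choose (n+1) := by
    have h := Nat.choose_symm (show n ≤ 2*n+1 by omega) (n := 2*n+1) (k := n)
    rw [show 2*n+1-n = n+1 from by omega] at h
    omega
  have hc1 : ((2*n+2).choose (n+1) : ℕ) = 2 * (2*n+1).choose (n+1) := by
    have h1 : (2*n+2).choose (n+1) = (2*n+1).choose n + (2*n+1).choose (n+1) := by
      rw [show 2*n+2 = (2*n+1)+1 from by omega, Nat.choose_succ_succ]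
    omega
  have expand : (1-x) * RosenfeldS (n+2) x - RosenfeldS (n+1) x
      = (RosenfeldS (n+2) x - RosenfeldS (n+1) x) - x * RosenfeldS (n+2) x := by ring
  rw [expand, hdiff, hx, hc1, hc2]
  push_cast
  ring

/-- Key first-order relation:
`R_{n+2}(q) = R_{n+1}(q) - 2·C(2n+1, n+1)·(q(1-q))^{n+1}·(1-2q)`. -/
lemma rosenfeld_step (n : ℕ) (q : ℝ) :
    Rosenfeld (n+2) q = Rosenfeld (n+1) q
      - 2 * ((2*n+1).choose (n+1) : ℝ) * (q*(1-q)) ^ (n+1) * (1 - 2*q) := by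
  have h1 := rosenfeldS_step n q
  have h2 := rosenfeldS_step n (1-q)
  rw [rosenfeld_eq, rosenfeld_eq]
  rw [mul_pow]
  have e : (1 - (1-q)) = q := by ring
  rw [e] at h2
  linear_combination (-(1-q)^(n+1)) * h1 + (q^(n+1)) * h2

lemma rosenfeld_zero (q : ℝ) : Rosenfeld 0 q = 1 := by
  simp [Rosenfeld]

lemma rosenfeld_one (q : ℝ) : Rosenfeld 1 q = 2 * q := by
  simp [Rosenfeld]
  ring

lemma rosenfeld_choose_rel (k : ℕ) :
    (k+2) * (2*k+3).choose (k+2) = 2 * (2*k+3) * (2*k+1).choose (k+1) := by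
  have h1 : (2*k+3) * (2*k+2).choose (k+1) = (2*k+3).choose (k+2) * (k+2) := by
    have := Nat.add_one_mul_choose_eq (2*k+2) (k+1)
    simpa [show (2*k+2)+1 = 2*k+3 from by omega] using this
  have h2 : (2*k+2).choose (k+1) = 2 * (2*k+1).choose (k+1) := by
    have h3 : (2*k+2).choose (k+1) = (2*k+1).choose k + (2*k+1).choose (k+1) := by
      rw [show 2*k+2 = (2*k+1)+1 from by omega, Nat.choose_succ_succ]
    have h4 := Nat.choose_symm (show k ≤ 2*k+1 by omega) (n := 2*k+1) (k := k)
    rw [show 2*k+1-k = k+1 from by omega] at h4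
    omega
  calc (k+2) * (2*k+3).choose (k+2) = (2*k+3) * (2*k+2).choose (k+1) := by
        rw [mul_comm]; exact h1.symm
    _ = 2 * (2*k+3) * (2*k+1).choose (k+1) := by rw [h2]; ring

/-- **Theorem 1.** The Rosenfeld polynomials satisfy the second-order linear recurrence
`R_n(q) = -((4nq² - 4nq - 6q² - n + 6q + 1)/(n-1)) R_{n-1}(q)
          + (2q(q-1)(2n-3)/(n-1)) R_{n-2}(q)`
for `n ≥ 2`, with initial conditions `R_0(q) = 1`, `R_1(q) = 2q`. -/
theorem rosenfeld_recurrence (q : ℝ) (n : ℕ) (hn : 2 ≤ n) :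
    Rosenfeld n q =
      -((4 * n * q ^ 2 - 4 * n * q - 6 * q ^ 2 - n + 6 * q + 1) / ((n : ℝ) - 1))
          * Rosenfeld (n - 1) q
        + (2 * q * (q - 1) * (2 * n - 3) / ((n : ℝ) - 1)) * Rosenfeld (n - 2) q
      ∧ Rosenfeld 0 q = 1 ∧ Rosenfeld 1 q = 2 * q := by
  refine ⟨?_, rosenfeld_zero q, rosenfeld_one q⟩
  obtain ⟨k, rfl⟩ : ∃ k, n = k + 2 := ⟨n - 2, by omega⟩
  rw [show k + 2 - 1 = k + 1 from by omega, show k + 2 - 2 = k from by omega]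
  rcases k with _ | j
  · -- n = 2
    have h := rosenfeld_step 0 q
    norm_num at h ⊢
    rw [h, rosenfeld_one, rosenfeld_zero]
    ring
  · -- n = j + 3
    have h2 := rosenfeld_step (j+1) q
    have h1 := rosenfeld_step j q
    rw [show (j:ℕ)+1+2 = j+3 from by omega, show 2*(j+1)+1 = 2*j+3 from by omega,
      show (j:ℕ)+1+1 = j+2 from by omega] at h2
    have hC : ((j+2 : ℕ) : ℝ) * ((2*j+3).choose (j+2) : ℝ)
        = 2 * ((2*j+3 : ℕ) : ℝ) * ((2*j+1).choose (j+1) : ℝ) := by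
      exact_mod_cast congrArg (Nat.cast : ℕ → ℝ) (rosenfeld_choose_rel j)
    push_cast at hC ⊢
    rw [show (j:ℕ)+1+2 = j+3 from by omega]
    have hj0 : (0:ℝ) ≤ (j:ℝ) := Nat.cast_nonneg j
    have hd' : ((j:ℝ) + 3) - 1 ≠ 0 := by intro h; linarith
    have main : (((j:ℝ)+3)-1) * Rosenfeld (j+3) q
        = -(4*((j:ℝ)+3)*q^2 - 4*((j:ℝ)+3)*q - 6*q^2 - ((j:ℝ)+3) + 6*q + 1)
            * Rosenfeld (j+2) q
          + (2*q*(q-1)*(2*((j:ℝ)+3)-3)) * Rosenfeld (j+1) q := by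
      rw [h2, h1]
      linear_combination (-2*(q*(1-q))^(j+2)*(1-2*q)) * hC
    calc Rosenfeld (j+3) q
        = ((((j:ℝ)+3)-1) * Rosenfeld (j+3) q) / (((j:ℝ)+3)-1) := by
          field_simp
      _ = _ := by rw [main]; ring
end

section
/- (Grunspan–Pérez-Marco incomplete beta formula) For 0 < q < 1/2 and a positive integer n, the Rosenfeld polynomial equals the regularized incomplete beta function I_s(n, 1/2) at s = 4q(1-q); explicitly, R_n(q) = (Γ(n + 1/2) / (Γ(n) · Γ(1/2))) · ∫_0^{4q(1-q)} t^{n-1} (1-t)^{-1/2} dt. -/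
open Finset

namespace RosenfeldAux

noncomputable def A (N : ℕ) (x : ℝ) : ℝ :=
  ∑ m ∈ range (N + 1), ((N + m).choose m : ℝ) * x ^ m

noncomputable def B (N : ℕ) (x : ℝ) : ℝ := (1 - x) ^ (N + 1) * A N x

lemma key_sum (N : ℕ) (x : ℝ) :
    (1 - x) * (∑ m ∈ range (N + 1), (m : ℝ) * ((N + m).choose m : ℝ) * x ^ (m - 1))
      - ((N : ℝ) + 1) * A N x
    = -(((N : ℝ) + 1) * ((2 * N + 1).choose N : ℝ)) * x ^ N := by
  have h1 : (∑ m ∈ range (N + 1), (m : ℝ) * ((N + m).choose m : ℝ) * x ^ (m - 1))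
      = ((N : ℝ) + 1) * ∑ k ∈ range N, ((N + k + 1).choose k : ℝ) * x ^ k := by
    rw [Finset.sum_range_succ', Finset.mul_sum]
    simp only [Nat.cast_zero, zero_mul, add_zero]
    refine Finset.sum_congr rfl fun k _ => ?_
    have hc : (N + (k + 1)).choose (k + 1) * (k + 1) = (N + k + 1).choose k * (N + 1) := by
      have h := Nat.choose_succ_right_eq (N + k + 1) k
      rw [show N + k + 1 - k = N + 1 by omega] at h
      rw [show N + (k + 1) = N + k + 1 by omega]
      exact h
    have hc' : ((N + (k + 1)).choose (k + 1) : ℝ) * ((k : ℝ) + 1)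
        = ((N + k + 1).choose k : ℝ) * ((N : ℝ) + 1) := by exact_mod_cast hc
    have : (k + 1 : ℕ) - 1 = k := by omega
    rw [this]
    push_cast
    linear_combination x ^ k * hc'
  rw [h1, A, Finset.sum_range_succ']
  have h2 : ∀ k : ℕ, ((N + k + 2).choose (k + 1) : ℝ) = ((N + k + 1).choose k : ℝ)
      + ((N + k + 1).choose (k + 1) : ℝ) := by
    intro k
    exact_mod_cast Nat.choose_succ_succ' (N + k + 1) k
  -- telescoping
  set g : ℕ → ℝ := fun j => ((N + j + 1).choose j : ℝ) * x ^ j with hg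
  have h5 : ∑ k ∈ range N, (g k * x + ((N + (k + 1)).choose (k + 1) : ℝ) * x ^ (k + 1))
      = ∑ k ∈ range N, g (k + 1) := by
    refine Finset.sum_congr rfl fun k _ => ?_
    simp only [hg]
    rw [show N + (k + 1) + 1 = N + k + 2 by omega, h2 k,
      show N + (k + 1) = N + k + 1 by omega]
    ring
  have h6 : ∑ k ∈ range N, g (k + 1) = ∑ k ∈ range N, g k + g N - g 0 := by
    have ha := Finset.sum_range_succ' g N
    have hb := Finset.sum_range_succ g N
    rw [hb] at ha
    linarith [ha]
  have hg0 : g 0 = 1 := by simp [hg]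
  have hgN : g N = ((2 * N + 1).choose N : ℝ) * x ^ N := by
    simp only [hg]
    rw [show N + N + 1 = 2 * N + 1 by omega]
  have hsum5 : ∑ k ∈ range N, (g k * x) + ∑ k ∈ range N, ((N + (k + 1)).choose (k + 1) : ℝ) * x ^ (k + 1)
      = ∑ k ∈ range N, g (k + 1) := by rw [← Finset.sum_add_distrib]; exact h5
  have hx : ∑ k ∈ range N, g k * x = (∑ k ∈ range N, g k) * x := by
    rw [Finset.sum_mul]
  have hG : ∑ k ∈ range N, ((N + k + 1).choose k : ℝ) * x ^ k = ∑ k ∈ range N, g k := rfl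
  have hA2 : ∑ k ∈ range N, ((N + (k + 1)).choose (k + 1) : ℝ) * x ^ (k + 1)
      = ∑ k ∈ range N, g (k + 1) - (∑ k ∈ range N, g k) * x := by
    linarith [hsum5, hx]
  rw [hG, hA2, h6, hg0, hgN]
  simp only [Nat.choose_zero_right, Nat.cast_one, pow_zero, Nat.add_zero, mul_one]
  ring

lemma hasDerivAt_A (N : ℕ) (x : ℝ) :
    HasDerivAt (A N) (∑ m ∈ range (N + 1), (m : ℝ) * ((N + m).choose m : ℝ) * x ^ (m - 1)) x := by
  have h : ∀ m ∈ range (N + 1),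
      HasDerivAt (fun y : ℝ => ((N + m).choose m : ℝ) * y ^ m)
        ((m : ℝ) * ((N + m).choose m : ℝ) * x ^ (m - 1)) x := by
    intro m _
    have := (hasDerivAt_pow m x).const_mul (((N + m).choose m : ℝ))
    refine this.congr_deriv (Eq.symm ?_)
    ring
  exact HasDerivAt.fun_sum h

lemma hasDerivAt_B (N : ℕ) (x : ℝ) :
    HasDerivAt (B N) (-(((N : ℝ) + 1) * ((2 * N + 1).choose N : ℝ)) * (x ^ N * (1 - x) ^ N)) x := by
  have h1 : HasDerivAt (fun y : ℝ => (1 - y) ^ (N + 1)) (-(((N : ℝ) + 1) * (1 - x) ^ N)) x := by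
    have := (hasDerivAt_pow (N + 1) (1 - x)).comp x
      ((hasDerivAt_const x (1 : ℝ)).sub (hasDerivAt_id x))
    refine this.congr_deriv (Eq.symm ?_)
    push_cast
    ring
  have h2 := hasDerivAt_A N x
  have h3 := h1.mul h2
  have hk := key_sum N x
  refine h3.congr_deriv (Eq.symm ?_)
  simp only [A] at hk ⊢
  linear_combination (-(1 - x) ^ N) * hk

lemma rosenfeld_eq_B (N : ℕ) (q : ℝ) :
    Rosenfeld (N + 1) q = 1 - B N q + B N (1 - q) := by
  rw [Rosenfeld, B, B, A, A]
  have h : ∀ m : ℕ, N + 1 + m - 1 = N + m := fun m => by omega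
  simp only [h, sub_sub_cancel]

lemma hasDerivAt_Rosenfeld (N : ℕ) (x : ℝ) :
    HasDerivAt (fun y => Rosenfeld (N + 1) y)
      (2 * ((N : ℝ) + 1) * ((2 * N + 1).choose N : ℝ) * (x ^ N * (1 - x) ^ N)) x := by
  have h1 := hasDerivAt_B N x
  have h2 : HasDerivAt (fun y : ℝ => B N (1 - y))
      (((N : ℝ) + 1) * ((2 * N + 1).choose N : ℝ) * (x ^ N * (1 - x) ^ N)) x := by
    have := (hasDerivAt_B N (1 - x)).comp x
      ((hasDerivAt_const x (1 : ℝ)).sub (hasDerivAt_id x))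
    refine this.congr_deriv (Eq.symm ?_)
    simp only [sub_sub_cancel]
    ring
  have h3 := ((hasDerivAt_const x (1 : ℝ)).sub h1).add h2
  have hfe : (fun y : ℝ => 1 - B N y + B N (1 - y)) = fun y => Rosenfeld (N + 1) y :=
    funext fun y => (rosenfeld_eq_B N y).symm
  rw [show ((fun _ => (1:ℝ)) - B N + fun y => B N (1 - y)) = fun y => Rosenfeld (N + 1) y
    from hfe] at h3
  refine h3.congr_deriv (Eq.symm ?_)
  ring

lemma gamma_nat_add_half (n : ℕ) :
    Real.Gamma ((n : ℝ) + 1 / 2)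
      = Real.sqrt Real.pi * (2 * n).factorial / (4 ^ n * n.factorial) := by
  induction n with
  | zero =>
    rw [show ((0:ℕ):ℝ) + 1/2 = 1/2 by norm_num, Real.Gamma_one_half_eq]
    simp
  | succ k ih =>
    have h : ((k + 1 : ℕ) : ℝ) + 1 / 2 = ((k : ℝ) + 1 / 2) + 1 := by push_cast; ring
    have hne : ((k : ℝ) + 1 / 2) ≠ 0 := by positivity
    rw [h, Real.Gamma_add_one hne, ih]
    have hf1 : ((2 * (k + 1)).factorial : ℝ)
        = (2 * (k : ℝ) + 2) * (2 * (k : ℝ) + 1) * ((2 * k).factorial : ℝ) := by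
      rw [show 2 * (k + 1) = (2 * k + 1) + 1 by ring, Nat.factorial_succ,
        Nat.factorial_succ]
      push_cast
      ring
    have hf2 : (((k + 1).factorial : ℕ) : ℝ) = ((k : ℝ) + 1) * (k.factorial : ℝ) := by
      rw [Nat.factorial_succ]; push_cast; ring
    rw [hf1, hf2]
    have h4 : (4 : ℝ) ^ (k + 1) = 4 * 4 ^ k := by ring
    rw [h4]
    have hk4 : (4 : ℝ) ^ k ≠ 0 := by positivity
    have hkf : (k.factorial : ℝ) ≠ 0 := by positivity
    field_simp
    ring

lemma const_eq (N : ℕ) :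
    Real.Gamma (((N + 1 : ℕ) : ℝ) + 1 / 2)
        / (Real.Gamma ((N + 1 : ℕ) : ℝ) * Real.Gamma (1 / 2))
      = ((2 * N + 2).factorial : ℝ) / (4 ^ (N + 1) * ((N + 1).factorial : ℝ) * (N.factorial : ℝ)) := by
  have h1 := gamma_nat_add_half (N + 1)
  have h2 : Real.Gamma (((N + 1 : ℕ) : ℝ)) = (N.factorial : ℝ) := by
    rw [show ((N + 1 : ℕ) : ℝ) = (N : ℝ) + 1 by push_cast; ring]
    exact Real.Gamma_nat_eq_factorial N
  rw [h1, h2, Real.Gamma_one_half_eq, show 2 * (N + 1) = 2 * N + 2 by ring]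
  have hpi : Real.sqrt Real.pi ≠ 0 := by positivity
  have h4 : (4 : ℝ) ^ (N + 1) ≠ 0 := by positivity
  have hfN : (N.factorial : ℝ) ≠ 0 := by positivity
  have hfN1 : (((N + 1).factorial : ℕ) : ℝ) ≠ 0 := by positivity
  field_simp

lemma const_mul_four (N : ℕ) :
    ((2 * N + 2).factorial : ℝ) / (4 ^ (N + 1) * ((N + 1).factorial : ℝ) * (N.factorial : ℝ))
        * 4 ^ (N + 1)
      = 2 * ((N : ℝ) + 1) * ((2 * N + 1).choose N : ℝ) := by
  have hc : ((2 * N + 1).choose N : ℝ) * (N.factorial : ℝ) * (((N + 1).factorial : ℕ) : ℝ)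
      = ((2 * N + 1).factorial : ℝ) := by
    have h := Nat.choose_mul_factorial_mul_factorial (show N ≤ 2 * N + 1 by omega)
    rw [show 2 * N + 1 - N = N + 1 by omega] at h
    exact_mod_cast h
  have hf1 : ((2 * N + 2).factorial : ℝ) = (2 * (N : ℝ) + 2) * ((2 * N + 1).factorial : ℝ) := by
    rw [show 2 * N + 2 = (2 * N + 1) + 1 by ring, Nat.factorial_succ]
    push_cast
    ring
  have h4 : (4 : ℝ) ^ (N + 1) ≠ 0 := by positivity
  have hfN : (N.factorial : ℝ) ≠ 0 := by positivity
  have hfN1 : (((N + 1).factorial : ℕ) : ℝ) ≠ 0 := by positivity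
  have hkey : ((2 * N + 2).factorial : ℝ)
      = 2 * ((N : ℝ) + 1) * ((2 * N + 1).choose N : ℝ)
        * ((((N + 1).factorial : ℕ) : ℝ) * (N.factorial : ℝ)) := by
    linear_combination hf1 - (2 * ((N : ℝ) + 1)) * hc
  rw [hkey]
  field_simp

lemma hasDerivAt_G (N : ℕ) (x : ℝ) (hx0 : 0 ≤ x) (hx1 : x < 1 / 2) :
    HasDerivAt (fun y : ℝ => ∫ t in (0:ℝ)..(4 * y * (1 - y)), t ^ N * (1 - t) ^ (-(1/2) : ℝ))
      ((4 * x * (1 - x)) ^ N * (1 - 4 * x * (1 - x)) ^ (-(1/2) : ℝ) * (4 - 8 * x)) x := by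
  have hfc : ContinuousOn (fun t : ℝ => t ^ N * (1 - t) ^ (-(1/2) : ℝ)) (Set.Iio (1:ℝ)) := by
    apply ContinuousOn.mul ((continuous_pow N).continuousOn)
    apply ContinuousOn.rpow_const (continuousOn_const.sub continuousOn_id)
    intro t ht
    left
    simp only [Set.mem_Iio] at ht
    simp only [Pi.sub_apply, id_eq]
    exact ne_of_gt (by linarith)
  have h2x : (0:ℝ) < 1 - 2 * x := by linarith
  have hsx0 : (0:ℝ) ≤ 4 * x * (1 - x) := by nlinarith
  have hsx1 : 4 * x * (1 - x) < 1 := by nlinarith [mul_pos h2x h2x]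
  have hsub : Set.uIcc (0:ℝ) (4 * x * (1 - x)) ⊆ Set.Iio (1:ℝ) := by
    rw [Set.uIcc_of_le hsx0]
    intro t ht
    exact lt_of_le_of_lt ht.2 hsx1
  have hint : IntervalIntegrable (fun t : ℝ => t ^ N * (1 - t) ^ (-(1/2) : ℝ))
      MeasureTheory.volume 0 (4 * x * (1 - x)) := (hfc.mono hsub).intervalIntegrable
  have hmeas : StronglyMeasurableAtFilter (fun t : ℝ => t ^ N * (1 - t) ^ (-(1/2) : ℝ))
      (nhds (4 * x * (1 - x))) MeasureTheory.volume :=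
    ⟨Set.Iio 1, Iio_mem_nhds hsx1, hfc.aestronglyMeasurable measurableSet_Iio⟩
  have hcont : ContinuousAt (fun t : ℝ => t ^ N * (1 - t) ^ (-(1/2) : ℝ)) (4 * x * (1 - x)) :=
    hfc.continuousAt (Iio_mem_nhds hsx1)
  have hG0 := intervalIntegral.integral_hasDerivAt_right hint hmeas hcont
  have hs : HasDerivAt (fun y : ℝ => 4 * y * (1 - y)) (4 - 8 * x) x := by
    have := ((hasDerivAt_id x).const_mul (4:ℝ)).mul
      ((hasDerivAt_const x (1:ℝ)).sub (hasDerivAt_id x))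
    refine this.congr_deriv (Eq.symm ?_)
    simp [id]
    ring
  have := hG0.comp x hs
  exact this

lemma rosenfeld_zero (N : ℕ) : Rosenfeld (N + 1) 0 = 0 := by
  rw [rosenfeld_eq_B]
  have hA0 : A N 0 = 1 := by
    rw [A, Finset.sum_eq_single 0]
    · simp
    · intro b _ hb
      simp [zero_pow hb]
    · simp
  have hB0 : B N 0 = 1 := by rw [B, hA0]; simp
  have hB1 : B N 1 = 0 := by rw [B]; simp
  rw [hB0]
  norm_num [hB1]

end RosenfeldAux



/-- **Grunspan–Pérez-Marco incomplete beta formula.**  For `0 < q < 1/2` and `n ≥ 1`,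
`R_n(q) = I_s(n, 1/2)` with `s = 4q(1-q)`, i.e.
`R_n(q) = (Γ(n+1/2)/(Γ(n)·Γ(1/2))) · ∫_0^{4q(1-q)} t^{n-1} (1-t)^{-1/2} dt`. -/
theorem rosenfeld_eq_incompleteBeta (q : ℝ) (hq0 : 0 < q) (hq : q < 1 / 2)
    (n : ℕ) (hn : 0 < n) :
    Rosenfeld n q =
      Real.Gamma ((n : ℝ) + 1 / 2) / (Real.Gamma (n : ℝ) * Real.Gamma (1 / 2)) *
        ∫ t in (0 : ℝ)..(4 * q * (1 - q)), t ^ (n - 1) * (1 - t) ^ (-(1 / 2) : ℝ) := by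

  obtain ⟨N, rfl⟩ : ∃ N, n = N + 1 := ⟨n - 1, by omega⟩
  simp only [Nat.add_sub_cancel]
  rw [RosenfeldAux.const_eq N]
  set K : ℝ := ((2 * N + 2).factorial : ℝ)
      / (4 ^ (N + 1) * ((N + 1).factorial : ℝ) * (N.factorial : ℝ)) with hK
  have key : ∀ y ∈ Set.Icc (0:ℝ) q,
      Rosenfeld (N + 1) y
        = K * ∫ t in (0:ℝ)..(4 * y * (1 - y)), t ^ N * (1 - t) ^ (-(1/2) : ℝ) := by
    apply eq_of_has_deriv_right_eq
      (f' := fun x => 2 * ((N : ℝ) + 1) * ((2 * N + 1).choose N : ℝ) * (x ^ N * (1 - x) ^ N))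
    · intro x _
      exact (RosenfeldAux.hasDerivAt_Rosenfeld N x).hasDerivWithinAt
    · intro x hx
      have hx0 : (0:ℝ) ≤ x := hx.1
      have hx1 : x < 1 / 2 := lt_trans hx.2 hq
      have hG := (RosenfeldAux.hasDerivAt_G N x hx0 hx1).const_mul K
      have h2x : (0:ℝ) < 1 - 2 * x := by linarith
      have heq : K * ((4 * x * (1 - x)) ^ N * (1 - 4 * x * (1 - x)) ^ (-(1/2) : ℝ) * (4 - 8 * x))
          = 2 * ((N : ℝ) + 1) * ((2 * N + 1).choose N : ℝ) * (x ^ N * (1 - x) ^ N) := by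
        have hr : (1 - 4 * x * (1 - x)) ^ (-(1/2) : ℝ) = (1 - 2 * x)⁻¹ := by
          rw [show (1:ℝ) - 4 * x * (1 - x) = (1 - 2 * x) ^ 2 by ring,
            ← Real.rpow_natCast (1 - 2 * x) 2, ← Real.rpow_mul h2x.le]
          norm_num [Real.rpow_neg_one]
        rw [hr]
        have hmp : (4 * x * (1 - x)) ^ N = 4 ^ N * x ^ N * (1 - x) ^ N := by
          rw [mul_pow, mul_pow]
        have h1 : K * ((4 * x * (1 - x)) ^ N * (1 - 2 * x)⁻¹ * (4 - 8 * x))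
            = K * 4 ^ (N + 1) * (x ^ N * (1 - x) ^ N) := by
          rw [hmp]
          have hinv : (1 - 2 * x)⁻¹ * (1 - 2 * x) = 1 := inv_mul_cancel₀ h2x.ne'
          linear_combination (K * 4 ^ N * x ^ N * (1 - x) ^ N * 4) * hinv
        rw [h1, hK, RosenfeldAux.const_mul_four]
      rw [heq] at hG
      exact hG.hasDerivWithinAt
    · intro x _
      exact (RosenfeldAux.hasDerivAt_Rosenfeld N x).continuousAt.continuousWithinAt
    · intro x hx
      have hx1 : x < 1 / 2 := lt_of_le_of_lt hx.2 hq
      exact ((RosenfeldAux.hasDerivAt_G N x hx.1 hx1).const_mul K).continuousAt.continuousWithinAt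
    · rw [RosenfeldAux.rosenfeld_zero]
      norm_num
  exact key q ⟨hq0.le, le_refl q⟩
end

section
/- (Leading-order asymptotics of the Rosenfeld polynomials) For fixed 0 < q < 1/2, R_n(q) is asymptotic to (4q(1-q))^n / (√π · (1-2q) · √n) as n → ∞; that is, lim_{n→∞} R_n(q) · √π · (1-2q) · √n / (4q(1-q))^n = 1. -/
open Finset Filter

section RosenfeldAux
open Real Nat

theorem aux_hockey (k b : ℕ) (hb : k ≤ b) :
    ∑ m ∈ range (k + 1), (b - m).choose (k - m) = (b + 1).choose k := by
  have h1 : ∑ m ∈ range (k + 1), (b - m).choose (k - m) = ∑ i ∈ Icc (b - k) b, i.choose (b - k) := by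
    refine sum_nbij' (fun m => b - m) (fun i => b - i) ?_ ?_ ?_ ?_ ?_ <;>
      simp only [mem_range, mem_Icc] <;> intro x hx
    · omega
    · omega
    · omega
    · omega
    · have h2 : b - k = (b - x) - (k - x) := by omega
      rw [h2, Nat.choose_symm (by omega)]
  rw [h1, Nat.sum_Icc_choose]
  have h3 : k = (b + 1) - (b - k + 1) := by omega
  rw [h3, Nat.choose_symm (by omega)]
  congr 1
  omega

theorem aux_vandermonde : ∀ k a b : ℕ, k ≤ b →
    ∑ m ∈ range (k + 1), (a + m).choose m * (b - m).choose (k - m) = (a + b + 1).choose k := by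
  intro k
  induction k with
  | zero => simp
  | succ k ih =>
    intro a
    induction a with
    | zero =>
      intro b hb
      simp only [Nat.zero_add, Nat.choose_self, one_mul]
      rw [aux_hockey _ _ hb]
    | succ a iha =>
      intro b hb
      -- split off m = 0, rewrite Pascal for m = j+1
      rw [sum_range_succ'] 
      have h1 : ∀ j ∈ range (k + 1), (a + 1 + (j + 1)).choose (j + 1) * (b - (j+1)).choose (k + 1 - (j+1))
          = (a + 1 + j).choose j * ((b-1) - j).choose (k - j)
            + (a + (j+1)).choose (j+1) * (b - (j+1)).choose (k + 1 - (j+1)) := by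
        intro j hj
        have e1 : a + 1 + (j + 1) = (a + 1 + j) + 1 := by ring
        rw [e1, Nat.choose_succ_succ]
        have e2 : b - (j + 1) = (b - 1) - j := by omega
        have e3 : k + 1 - (j + 1) = k - j := by omega
        have e4 : a + 1 + j = a + (j + 1) := by ring
        rw [e2, e3, Nat.add_mul, ← e2, ← e3, e4]
      rw [sum_congr rfl h1, sum_add_distrib]
      rw [ih (a + 1) (b - 1) (by omega)]
      have h5 := sum_range_succ' (fun m => (a + m).choose m * (b - m).choose (k + 1 - m)) (k + 1)
      have h6 : ∑ m ∈ range (k + 2), (a + m).choose m * (b - m).choose (k + 1 - m)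
          = (a + b + 1).choose (k + 1) := iha b hb
      have e7 : a + 1 + (b - 1) + 1 = a + b + 1 := by omega
      rw [e7]
      have e8 : a + 1 + b + 1 = (a + b + 1) + 1 := by ring
      rw [e8, Nat.choose_succ_succ]
      simp only [Nat.choose_zero_right, one_mul, Nat.sub_zero, Nat.add_zero,
        Nat.succ_eq_add_one] at *
      rw [h5] at h6
      omega

theorem aux_tail (x y : ℝ) (hxy : x + y = 1) (N : ℕ) :
    y ^ (N + 1) * ∑ m ∈ range (N + 1), ((N + m).choose m : ℝ) * x ^ m
      = ∑ k ∈ range (N + 1), ((2 * N + 1).choose k : ℝ) * x ^ k * y ^ (2 * N + 1 - k) := by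
  have step1 : y ^ (N + 1) * ∑ m ∈ range (N + 1), ((N + m).choose m : ℝ) * x ^ m
      = ∑ m ∈ range (N + 1), ∑ k ∈ Ico m (N + 1),
          ((N + m).choose m : ℝ) * ((N - m).choose (k - m) : ℝ)
            * (x ^ k * (y ^ (N + 1) * y ^ (N - k))) := by
    rw [mul_sum]
    refine sum_congr rfl ?_
    intro m hm
    rw [mem_range] at hm
    have hm' : m ≤ N := by omega
    rw [sum_Ico_eq_sum_range]
    have hNm : N + 1 - m = (N - m) + 1 := by omega
    rw [hNm]
    have expand : ((N + m).choose m : ℝ) * x ^ m * y ^ (N + 1) * (x + y) ^ (N - m)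
        = ∑ i ∈ range ((N - m) + 1),
            ((N + m).choose m : ℝ) * ((N - m).choose (m + i - m) : ℝ)
              * (x ^ (m + i) * (y ^ (N + 1) * y ^ (N - (m + i)))) := by
      rw [add_pow, mul_sum]
      refine sum_congr rfl ?_
      intro i hi
      rw [mem_range] at hi
      have e1 : m + i - m = i := by omega
      have e2 : N - (m + i) = N - m - i := by omega
      have e3 : x ^ (m + i) = x ^ m * x ^ i := by rw [pow_add]
      rw [e1, e2, e3]
      ring
    rw [hxy, one_pow, mul_one] at expand
    rw [← expand]
    ring
  rw [step1, range_eq_Ico, sum_Ico_Ico_comm]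
  refine sum_congr rfl ?_
  intro k hk
  rw [mem_Ico] at hk
  have hk' : k ≤ N := by omega
  have e0 : Ico 0 (k + 1) = range (k + 1) := by rw [range_eq_Ico]
  rw [e0]
  have key : ∑ m ∈ range (k + 1),
      ((N + m).choose m : ℝ) * ((N - m).choose (k - m) : ℝ)
        * (x ^ k * (y ^ (N + 1) * y ^ (N - k)))
      = (((2 * N + 1).choose k : ℕ) : ℝ) * (x ^ k * (y ^ (N + 1) * y ^ (N - k))) := by
    rw [← sum_mul]
    congr 1
    have h := aux_vandermonde k N N hk'
    have h2 : ((∑ m ∈ range (k + 1), (N + m).choose m * (N - m).choose (k - m) : ℕ) : ℝ)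
        = (((N + N + 1).choose k : ℕ) : ℝ) := by rw [h]
    push_cast at h2
    rw [h2]
    norm_cast
    congr 1
    omega
  rw [key]
  have e4 : y ^ (N + 1) * y ^ (N - k) = y ^ (2 * N + 1 - k) := by
    rw [← pow_add]
    congr 1
    omega
  rw [e4]
  ring

theorem aux_ros (q : ℝ) (N : ℕ) :
    Rosenfeld (N + 1) q
      = 2 * ∑ k ∈ range (N + 1), ((2 * N + 1).choose k : ℝ) * (1 - q) ^ k * q ^ (2 * N + 1 - k) := by
  set p : ℝ := 1 - q with hp
  have hidx : ∀ m : ℕ, (N + 1 + m - 1) = N + m := by intro m; omega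
  have hros : Rosenfeld (N + 1) q
      = 1 - p ^ (N + 1) * ∑ m ∈ range (N + 1), ((N + m).choose m : ℝ) * q ^ m
        + q ^ (N + 1) * ∑ m ∈ range (N + 1), ((N + m).choose m : ℝ) * p ^ m := by
    simp only [Rosenfeld, hidx, hp]
  have hA := aux_tail q p (by rw [hp]; ring) N
  have hB := aux_tail p q (by rw [hp]; ring) N
  -- binomial theorem
  have hpow : (1 : ℝ) = ∑ k ∈ range (2 * N + 2),
      ((2 * N + 1).choose k : ℝ) * q ^ k * p ^ (2 * N + 1 - k) := by
    have h1 : (q + p) ^ (2 * N + 1)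
        = ∑ k ∈ range (2 * N + 1 + 1), q ^ k * p ^ (2 * N + 1 - k) * ((2 * N + 1).choose k : ℝ) :=
      add_pow q p (2 * N + 1)
    have h2 : q + p = 1 := by rw [hp]; ring
    rw [h2, one_pow] at h1
    rw [h1]
    refine sum_congr (by congr 1) ?_
    intro k _
    ring
  -- split the full sum
  have hsplit : ∑ k ∈ range (2 * N + 2), ((2 * N + 1).choose k : ℝ) * q ^ k * p ^ (2 * N + 1 - k)
      = (∑ k ∈ range (N + 1), ((2 * N + 1).choose k : ℝ) * q ^ k * p ^ (2 * N + 1 - k))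
        + ∑ k ∈ Ico (N + 1) (2 * N + 2), ((2 * N + 1).choose k : ℝ) * q ^ k * p ^ (2 * N + 1 - k) := by
    rw [range_eq_Ico, ← sum_Ico_consecutive _ (Nat.zero_le (N+1)) (by omega : N + 1 ≤ 2 * N + 2), range_eq_Ico]
  -- the upper part equals the reflected lower part with p,q swapped
  have hrefl : ∑ k ∈ Ico (N + 1) (2 * N + 2), ((2 * N + 1).choose k : ℝ) * q ^ k * p ^ (2 * N + 1 - k)
      = ∑ k ∈ range (N + 1), ((2 * N + 1).choose k : ℝ) * p ^ k * q ^ (2 * N + 1 - k) := by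
    rw [sum_Ico_eq_sum_range]
    have e1 : 2 * N + 2 - (N + 1) = N + 1 := by omega
    rw [e1]
    rw [← sum_range_reflect (fun k => ((2 * N + 1).choose k : ℝ) * p ^ k * q ^ (2 * N + 1 - k)) (N + 1)]
    refine sum_congr rfl ?_
    intro i hi
    rw [mem_range] at hi
    have e2 : N + 1 - 1 - i = N - i := by omega
    have e3 : (2 * N + 1).choose (N + 1 + i) = (2 * N + 1).choose (N - i) := by
      rw [← Nat.choose_symm (by omega : N + 1 + i ≤ 2 * N + 1)]
      congr 1
      omega
    have e4 : 2 * N + 1 - (N - i) = N + 1 + i := by omega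
    have e5 : 2 * N + 1 - (N + 1 + i) = N - i := by omega
    rw [e2, e3, e4, e5]
    ring
  rw [hros, hA, hB, hpow, hsplit, hrefl]
  ring

theorem aux_central_eq (n : ℕ) (hn : 1 ≤ n) :
    ((2 * n).choose n : ℝ) * Real.sqrt n / 4 ^ n
      = Stirling.stirlingSeq (2 * n) / (Stirling.stirlingSeq n) ^ 2 := by
  have hn0 : (0 : ℝ) < (n : ℝ) := by exact_mod_cast Nat.pos_of_ne_zero (by omega)
  have hs0 : (0 : ℝ) < Real.sqrt n := Real.sqrt_pos.mpr hn0
  have hch : ((2 * n).choose n : ℝ) = ((2 * n)! : ℝ) / ((n ! : ℝ) * (n ! : ℝ)) := by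
    have h2n : 2 * n - n = n := by omega
    rw [Nat.cast_choose ℝ (by omega : n ≤ 2 * n), h2n]
  have hs : Real.sqrt (n : ℝ) * Real.sqrt (n : ℝ) = (n : ℝ) :=
    Real.mul_self_sqrt hn0.le
  have h4 : Real.sqrt (2 * ((2 * n : ℕ) : ℝ)) = 2 * Real.sqrt n := by
    have : 2 * ((2 * n : ℕ) : ℝ) = (2 * Real.sqrt n) ^ 2 := by
      push_cast
      nlinarith [hs]
    rw [this, Real.sqrt_sq (by positivity)]
  have h2e : Real.sqrt (2 * (n : ℝ)) ^ 2 = 2 * (n : ℝ) :=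
    Real.sq_sqrt (by positivity)
  have hpow2 : (((2 * n : ℕ) : ℝ) / Real.exp 1) ^ (2 * n)
      = 4 ^ n * (((n : ℝ) / Real.exp 1) ^ n) ^ 2 := by
    push_cast
    have e1 : (2 : ℝ) ^ (2 * n) = 4 ^ n := by rw [pow_mul]; norm_num
    have e2 : ((n : ℝ) / Real.exp 1) ^ (2 * n) = (((n : ℝ) / Real.exp 1) ^ n) ^ 2 := by
      rw [← pow_mul, mul_comm]
    have e3 : (2 * (n : ℝ)) / Real.exp 1 = 2 * ((n : ℝ) / Real.exp 1) := by ring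
    rw [e3, mul_pow, e1, e2]
  have hfac1 : ((n ! : ℕ) : ℝ) ≠ 0 := by positivity
  have hfac2 : (((2 * n) ! : ℕ) : ℝ) ≠ 0 := by positivity
  have hne : ((n : ℝ) / Real.exp 1) ^ n ≠ 0 := by positivity
  rw [Stirling.stirlingSeq, Stirling.stirlingSeq, hch, h4, hpow2]
  rw [div_pow (Nat.factorial n : ℝ), mul_pow, h2e]
  field_simp
  ring_nf
  rw [Real.sq_sqrt hn0.le]

theorem aux_central :
    Tendsto (fun n : ℕ => ((2 * n).choose n : ℝ) * Real.sqrt n / 4 ^ n) atTop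
      (nhds (1 / Real.sqrt Real.pi)) := by
  have hπ : (0 : ℝ) < Real.sqrt Real.pi := Real.sqrt_pos.mpr Real.pi_pos
  have h2 : Tendsto (fun n : ℕ => 2 * n) atTop atTop :=
    tendsto_atTop_mono (fun n => (by omega : n ≤ 2 * n)) tendsto_id
  have hs2 : Tendsto (fun n : ℕ => Stirling.stirlingSeq (2 * n)) atTop
      (nhds (Real.sqrt Real.pi)) := Stirling.tendsto_stirlingSeq_sqrt_pi.comp h2
  have hsq : Tendsto (fun n : ℕ => (Stirling.stirlingSeq n) ^ 2) atTop
      (nhds ((Real.sqrt Real.pi) ^ 2)) := Stirling.tendsto_stirlingSeq_sqrt_pi.pow 2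
  have hdiv := hs2.div hsq (by positivity)
  have hval : Real.sqrt Real.pi / (Real.sqrt Real.pi) ^ 2 = 1 / Real.sqrt Real.pi := by
    rw [sq]
    field_simp
  rw [hval] at hdiv
  refine hdiv.congr' ?_
  filter_upwards [eventually_ge_atTop 1] with n hn
  exact (aux_central_eq n hn).symm

noncomputable def auxF (r : ℝ) (n j : ℕ) : ℝ :=
  if j < n then ((2 * n - 1).choose (n - 1 - j) : ℝ) / ((2 * n - 1).choose (n - 1) : ℝ) * r ^ j
  else 0

theorem auxF_ratio_cast (n j : ℕ) (h : j + 2 ≤ n) :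
    (((2 * n - 1).choose (n - 1 - (j + 1)) : ℕ) : ℝ)
      = (((2 * n - 1).choose (n - 1 - j) : ℕ) : ℝ) * (((n : ℝ) - 1 - j) / ((n : ℝ) + 1 + j)) := by
  have key := Nat.choose_succ_right_eq (2 * n - 1) (n - 2 - j)
  have e1 : n - 2 - j + 1 = n - 1 - j := by omega
  have e2 : 2 * n - 1 - (n - 2 - j) = n + 1 + j := by omega
  have e3 : n - 1 - (j + 1) = n - 2 - j := by omega
  rw [e1, e2] at key
  rw [e3]
  have key2 : (((2 * n - 1).choose (n - 1 - j) : ℕ) : ℝ) * ((n : ℝ) - 1 - j)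
      = (((2 * n - 1).choose (n - 2 - j) : ℕ) : ℝ) * ((n : ℝ) + 1 + j) := by
    have ec : ((n - 1 - j : ℕ) : ℝ) = (n : ℝ) - 1 - j := by
      have : (n - 1 - j : ℕ) = n - (1 + j) := by omega
      rw [this, Nat.cast_sub (by omega)]
      push_cast
      ring
    calc (((2 * n - 1).choose (n - 1 - j) : ℕ) : ℝ) * ((n : ℝ) - 1 - j)
        = (((2 * n - 1).choose (n - 1 - j) * (n - 1 - j) : ℕ) : ℝ) := by
          push_cast [ec]; ring
      _ = (((2 * n - 1).choose (n - 2 - j) * (n + 1 + j) : ℕ) : ℝ) := by rw [key]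
      _ = _ := by push_cast; ring
  have hne : ((n : ℝ) + 1 + j) ≠ 0 := by positivity
  field_simp
  linarith [key2]

theorem auxF_tendsto (r : ℝ) (j : ℕ) :
    Tendsto (fun n : ℕ => auxF r n j) atTop (nhds (r ^ j)) := by
  induction j with
  | zero =>
    have : ∀ᶠ n : ℕ in atTop, auxF r n 0 = 1 := by
      filter_upwards [eventually_ge_atTop 1] with n hn
      have hpos : 0 < (2 * n - 1).choose (n - 1) :=
        Nat.choose_pos (by omega)
      have : ((2 * n - 1).choose (n - 1) : ℝ) ≠ 0 := by positivity
      simp [auxF, hn, Nat.lt_of_lt_of_le Nat.zero_lt_one hn, this]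
    have h2 := (tendsto_const_nhds (x := (1:ℝ))).congr' (this.mono fun n hn => hn.symm)
    simpa using h2
  | succ j ih =>
    have hratio : Tendsto (fun n : ℕ => ((n : ℝ) - 1 - j) / ((n : ℝ) + 1 + j)) atTop (nhds 1) := by
      have ht : Tendsto (fun n : ℕ => (n : ℝ) + 1 + j) atTop atTop := by
        apply tendsto_atTop_add_const_right
        apply tendsto_atTop_add_const_right
        exact tendsto_natCast_atTop_atTop
      have h0 : Tendsto (fun n : ℕ => (2 * (j : ℝ) + 2) / ((n : ℝ) + 1 + j)) atTop (nhds 0) :=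
        Tendsto.div_atTop tendsto_const_nhds ht
      have heq : ∀ n : ℕ, ((n : ℝ) - 1 - j) / ((n : ℝ) + 1 + j)
          = 1 - (2 * (j : ℝ) + 2) / ((n : ℝ) + 1 + j) := by
        intro n
        have hne : ((n : ℝ) + 1 + j) ≠ 0 := by positivity
        field_simp
        ring
      have := (tendsto_const_nhds (x := (1 : ℝ))).sub h0
      rw [sub_zero] at this
      exact this.congr (fun n => (heq n).symm)
    have hmain : Tendsto (fun n : ℕ => auxF r n j * (((n : ℝ) - 1 - j) / ((n : ℝ) + 1 + j)) * r)
        atTop (nhds (r ^ j * 1 * r)) := (ih.mul hratio).mul tendsto_const_nhds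
    rw [mul_one, ← pow_succ] at hmain
    refine hmain.congr' ?_
    filter_upwards [eventually_ge_atTop (j + 2)] with n hn
    have h1 : j < n := by omega
    have h2 : j + 1 < n := by omega
    simp only [auxF, if_pos h1, if_pos h2]
    rw [auxF_ratio_cast n j hn]
    ring

theorem auxF_bound (r : ℝ) (hr : 0 ≤ r) (n j : ℕ) : ‖auxF r n j‖ ≤ r ^ j := by
  rw [Real.norm_eq_abs]
  rcases lt_or_ge j n with h | h
  · have hn1 : 1 ≤ n := by omega
    have hle : (2 * n - 1).choose (n - 1 - j) ≤ (2 * n - 1).choose (n - 1) := by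
      have := Nat.choose_le_middle (n - 1 - j) (2 * n - 1)
      have e : (2 * n - 1) / 2 = n - 1 := by omega
      rwa [e] at this
    have hpos : (0 : ℝ) < ((2 * n - 1).choose (n - 1) : ℝ) := by
      exact_mod_cast Nat.choose_pos (by omega : n - 1 ≤ 2 * n - 1)
    have hratio : ((2 * n - 1).choose (n - 1 - j) : ℝ) / ((2 * n - 1).choose (n - 1) : ℝ) ≤ 1 := by
      rw [div_le_one hpos]
      exact_mod_cast hle
    have hratio0 : (0 : ℝ) ≤ ((2 * n - 1).choose (n - 1 - j) : ℝ) / ((2 * n - 1).choose (n - 1) : ℝ) := by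
      positivity
    have hpow : (0 : ℝ) ≤ r ^ j := by positivity
    rw [auxF, if_pos h, abs_of_nonneg (by positivity)]
    calc ((2 * n - 1).choose (n - 1 - j) : ℝ) / ((2 * n - 1).choose (n - 1) : ℝ) * r ^ j
        ≤ 1 * r ^ j := by
          exact mul_le_mul_of_nonneg_right hratio hpow
      _ = r ^ j := one_mul _
  · rw [auxF, if_neg (by omega)]
    simp
    positivity

end RosenfeldAux

open Real Nat in
/-- **Leading-order asymptotics (Grunspan–Pérez-Marco).**  For fixed `0 < q < 1/2`,
`R_n(q) ∼ (4q(1-q))^n / (√π (1-2q) √n)` as `n → ∞`. -/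
theorem rosenfeld_asymptotics (q : ℝ) (hq0 : 0 < q) (hq : q < 1 / 2) :
    Tendsto
      (fun n : ℕ =>
        Rosenfeld n q * Real.sqrt Real.pi * (1 - 2 * q) * Real.sqrt n
          / (4 * q * (1 - q)) ^ n)
      atTop (nhds 1) := by
  set p : ℝ := 1 - q with hp
  have hp0 : 0 < p := by rw [hp]; linarith
  have hqp : q < p := by rw [hp]; linarith
  set r : ℝ := q / p with hrdef
  have hr0 : 0 ≤ r := by positivity
  have hr1 : r < 1 := (div_lt_one hp0).mpr hqp
  have hsum : Summable (fun j : ℕ => r ^ j) := summable_geometric_of_lt_one hr0 hr1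
  have hlim : Tendsto (fun n : ℕ => ∑' j, auxF r n j) atTop (nhds (∑' j : ℕ, r ^ j)) :=
    tendsto_tsum_of_dominated_convergence hsum (auxF_tendsto r)
      (Eventually.of_forall fun n j => auxF_bound r hr0 n j)
  rw [tsum_geometric_of_lt_one hr0 hr1] at hlim
  have hfin : ∀ n : ℕ, (∑' j, auxF r n j) = ∑ j ∈ range n, auxF r n j := by
    intro n
    refine tsum_eq_sum ?_
    intro j hj
    rw [mem_range] at hj
    rw [auxF, if_neg (by omega)]
  -- Rosenfeld in terms of auxF
  have hros : ∀ n : ℕ, 1 ≤ n → Rosenfeld n q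
      = 2 * ((2 * n - 1).choose (n - 1) : ℝ) * p ^ (n - 1) * q ^ n * ∑ j ∈ range n, auxF r n j := by
    intro n hn
    obtain ⟨N, rfl⟩ : ∃ N, n = N + 1 := ⟨n - 1, by omega⟩
    rw [aux_ros q N]
    rw [← Finset.sum_range_reflect (fun k => ((2 * N + 1).choose k : ℝ) * p ^ k * q ^ (2 * N + 1 - k)) (N + 1)]
    have hCD : (0 : ℝ) < ((2 * N + 1).choose N : ℝ) := by
      exact_mod_cast Nat.choose_pos (by omega : N ≤ 2 * N + 1)
    have en1 : 2 * (N + 1) - 1 = 2 * N + 1 := by omega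
    have en2 : N + 1 - 1 = N := by omega
    rw [Finset.mul_sum, Finset.mul_sum]
    refine sum_congr rfl ?_
    intro j hj
    rw [mem_range] at hj
    have hjN : j ≤ N := by omega
    have e1 : N + 1 - 1 - j = N - j := by omega
    have e2 : 2 * N + 1 - (N - j) = N + 1 + j := by omega
    simp only [auxF, en1, en2, if_pos (by omega : j < N + 1), e1, e2]
    have hsplit : p ^ N = p ^ (N - j) * p ^ j := by rw [← pow_add]; congr 1; omega
    have hq2 : q ^ (N + 1 + j) = q ^ (N + 1) * q ^ j := by rw [← pow_add]
    rw [hrdef, div_pow, hq2]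
    field_simp
    rw [hsplit]
    ring
  -- central binomial relation
  have hcb : ∀ n : ℕ, 1 ≤ n → ((2 * n).choose n : ℝ) = 2 * ((2 * n - 1).choose (n - 1) : ℝ) := by
    intro n hn
    have e1 : 2 * n = (2 * n - 1) + 1 := by omega
    have e2 : n = (n - 1) + 1 := by omega
    have e3 : (2 * n).choose n = (2 * n - 1).choose (n - 1) + (2 * n - 1).choose n := by
      have h := Nat.choose_succ_succ (2 * n - 1) (n - 1)
      rw [Nat.succ_eq_add_one, Nat.succ_eq_add_one,
        show 2 * n - 1 + 1 = 2 * n by omega, show n - 1 + 1 = n by omega] at h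
      exact h
    have e4 : (2 * n - 1).choose n = (2 * n - 1).choose (n - 1) := by
      rw [← Nat.choose_symm (by omega : n ≤ 2 * n - 1)]
      congr 1
      omega
    rw [e3, e4]
    push_cast
    ring
  -- value of the limit
  have hπ : (0 : ℝ) < Real.sqrt Real.pi := Real.sqrt_pos.mpr Real.pi_pos
  have h2q : (0 : ℝ) < 1 - 2 * q := by linarith
  have hrne : 1 - r ≠ 0 := by linarith
  -- assembled tendsto
  have hT : Tendsto
      (fun n : ℕ => (((2 * n).choose n : ℝ) * Real.sqrt n / 4 ^ n)
        * (Real.sqrt Real.pi * (1 - 2 * q) / p) * ∑' j, auxF r n j) atTop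
      (nhds ((1 / Real.sqrt Real.pi) * (Real.sqrt Real.pi * (1 - 2 * q) / p) * (1 - r)⁻¹)) :=
    (aux_central.mul tendsto_const_nhds).mul hlim
  have hval : (1 / Real.sqrt Real.pi) * (Real.sqrt Real.pi * (1 - 2 * q) / p) * (1 - r)⁻¹ = 1 := by
    have h1r : 1 - r = (1 - 2 * q) / p := by
      rw [hrdef, hp]
      field_simp [show (1:ℝ) - q ≠ 0 by linarith]
      ring
    rw [h1r]
    field_simp
  rw [hval] at hT
  refine hT.congr' ?_
  filter_upwards [eventually_ge_atTop 1] with n hn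
  rw [hros n hn, hfin n, hcb n hn]
  have hpow : (4 * q * p) ^ n = 4 ^ n * q ^ n * p ^ n := by
    rw [mul_pow, mul_pow]
  have hpn : p ^ n = p ^ (n - 1) * p := by
    conv_lhs => rw [show n = (n - 1) + 1 by omega]
    rw [pow_succ]
  have h4 : (0:ℝ) < 4 ^ n := by positivity
  have hqn : (0:ℝ) < q ^ n := by positivity
  have hppow : (0:ℝ) < p ^ (n - 1) := by positivity
  rw [hp] at *
  rw [hpow, hpn]
  field_simp
end

section
/- For every real q with q ≠ 1/2 and every integer n ≥ 3, the quantities A_n(q) satisfy the second-order linear recurrence A_n(q) = -((4nq² - 4nq - 6q² - n + 6q)/(n-1)) · A_{n-1}(q) + (2q(q-1)(2n-3)/(n-2)) · A_{n-2}(q), with initial conditions A_1(q) = q/(1-2q) and A_2(q) = 2q²(2-q)/(1-2q). -/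
open Finset
set_option maxHeartbeats 2000000

/-- `A_n(q) = (q^n/(1-2q)) · Σ_{m=0}^{n-1} C(n+m-1, m) (1-q)^m (n-m)`. -/
noncomputable def Avalue (n : ℕ) (q : ℝ) : ℝ :=
  q ^ n / (1 - 2 * q) *
    ∑ m ∈ range n, ((n + m - 1).choose m : ℝ) * (1 - q) ^ m * ((n : ℝ) - (m : ℝ))

/-- Telescoping certificate for the Zeilberger-style proof of the recurrence. -/
noncomputable def certF (q : ℝ) (j : ℕ) : ℕ → ℝ
  | 0 => 0
  | k + 1 => ((j + k + 1).choose k : ℝ) * (1 - q) ^ (k + 1) *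
      (q * ((j : ℝ) + 1) * (((j : ℝ) + 2) * (3 * (j : ℝ) + 7)
        - 2 * q * ((j : ℝ) + 3) * (2 * (j : ℝ) + 3)
        + ((4 * q - 4) * ((j : ℝ) + 3) + 3 - 6 * q) * ((k : ℝ) + 1) + ((k : ℝ) + 1) ^ 2))

lemma cert_step (q : ℝ) (j m : ℕ) :
    ((j : ℝ) + 2) * ((j : ℝ) + 1) * q ^ 2 *
        (((j + m + 2).choose m : ℝ) * (1 - q) ^ m * ((j : ℝ) + 3 - (m : ℝ)))
      + ((j : ℝ) + 1) * (4 * ((j : ℝ) + 3) * q ^ 2 - 4 * ((j : ℝ) + 3) * q - 6 * q ^ 2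
            - ((j : ℝ) + 3) + 6 * q) * q *
        (((j + m + 1).choose m : ℝ) * (1 - q) ^ m * ((j : ℝ) + 2 - (m : ℝ)))
      - ((j : ℝ) + 2) * (2 * q * (q - 1) * (2 * (j : ℝ) + 3)) *
        (((j + m).choose m : ℝ) * (1 - q) ^ m * ((j : ℝ) + 1 - (m : ℝ)))
      = certF q j (m + 1) - certF q j m := by
  cases m with
  | zero => simp [certF]; ring
  | succ k =>
      have h1 : (j + k + 1).choose (k + 1) * (k + 1) = (j + k + 1).choose k * (j + 1) := by
        rw [Nat.choose_succ_right_eq]; congr 1; omega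
      have h2 : (j + k + 2).choose (k + 1) * (k + 1) = (j + k + 2).choose k * (j + 2) := by
        rw [Nat.choose_succ_right_eq]; congr 1; omega
      have hr1 : ((j + k + 1).choose (k + 1) : ℝ) * ((k : ℝ) + 1)
          = ((j + k + 1).choose k : ℝ) * ((j : ℝ) + 1) := by exact_mod_cast congrArg (Nat.cast (R := ℝ)) h1
      have hr2 : ((j + k + 2).choose (k + 1) : ℝ) * ((k : ℝ) + 1)
          = ((j + k + 2).choose k : ℝ) * ((j : ℝ) + 2) := by exact_mod_cast congrArg (Nat.cast (R := ℝ)) h2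
      have hj1 : (j : ℝ) + 1 ≠ 0 := by positivity
      have hj2 : (j : ℝ) + 2 ≠ 0 := by positivity
      have hB : ((j + k + 1).choose k : ℝ)
          = ((j + k + 1).choose (k + 1) : ℝ) * ((k : ℝ) + 1) / ((j : ℝ) + 1) := by
        field_simp; linarith [hr1]
      have hD : ((j + k + 2).choose k : ℝ)
          = ((j + k + 2).choose (k + 1) : ℝ) * ((k : ℝ) + 1) / ((j : ℝ) + 2) := by
        field_simp; linarith [hr2]
      have hP1 : ((j + k + 3).choose (k + 1) : ℝ)
          = ((j + k + 2).choose k : ℝ) + ((j + k + 2).choose (k + 1) : ℝ) := by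
        have := Nat.choose_succ_succ' (j + k + 2) k
        rw [show (j + k + 2) + 1 = j + k + 3 by omega] at this
        exact_mod_cast congrArg (Nat.cast (R := ℝ)) this
      have hP2 : ((j + k + 2).choose (k + 1) : ℝ)
          = ((j + k + 1).choose k : ℝ) + ((j + k + 1).choose (k + 1) : ℝ) := by
        have := Nat.choose_succ_succ' (j + k + 1) k
        rw [show (j + k + 1) + 1 = j + k + 2 by omega] at this
        exact_mod_cast congrArg (Nat.cast (R := ℝ)) this
      simp only [certF, show j + (k + 1) + 2 = j + k + 3 by omega,
        show j + (k + 1) + 1 = j + k + 2 by omega, show j + (k + 1) = j + k + 1 by omega]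
      push_cast
      rw [hP1, hD, hP2, hB]
      field_simp
      ring

lemma cert_boundary (q : ℝ) (j : ℕ) :
    certF q j (j + 3)
      = ((j : ℝ) + 2) * (2 * q * (q - 1) * (2 * (j : ℝ) + 3)) *
          (((2 * j + 2).choose (j + 2) : ℝ) * (1 - q) ^ (j + 2)) := by
  have h2 : (2 * j + 2).choose (j + 2) * (j + 2) = (2 * j + 2).choose (j + 1) * (j + 1) := by
    rw [show j + 2 = (j + 1) + 1 by omega, Nat.choose_succ_right_eq]
    congr 1
    omega
  have hr2 : ((2 * j + 2).choose (j + 2) : ℝ) * ((j : ℝ) + 2)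
      = ((2 * j + 2).choose (j + 1) : ℝ) * ((j : ℝ) + 1) := by
    exact_mod_cast congrArg (Nat.cast (R := ℝ)) h2
  have hj2 : (j : ℝ) + 2 ≠ 0 := by positivity
  have hU : ((2 * j + 2).choose (j + 2) : ℝ)
      = ((2 * j + 2).choose (j + 1) : ℝ) * ((j : ℝ) + 1) / ((j : ℝ) + 2) := by
    field_simp; linarith [hr2]
  have hP : ((2 * j + 3).choose (j + 2) : ℝ)
      = ((2 * j + 2).choose (j + 1) : ℝ) + ((2 * j + 2).choose (j + 2) : ℝ) := by
    have := Nat.choose_succ_succ' (2 * j + 2) (j + 1)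
    rw [show (2 * j + 2) + 1 = 2 * j + 3 by omega, show (j + 1) + 1 = j + 2 by omega] at this
    exact_mod_cast congrArg (Nat.cast (R := ℝ)) this
  show ((j + (j + 2) + 1).choose (j + 2) : ℝ) * (1 - q) ^ ((j + 2) + 1) * _ = _
  rw [show j + (j + 2) + 1 = 2 * j + 3 by omega, hP, hU]
  push_cast
  field_simp
  ring

/-- **Theorem 4.** `A_n(q)` satisfies the second-order linear recurrence
`A_n(q) = -((4nq² - 4nq - 6q² - n + 6q)/(n-1)) A_{n-1}(q) + (2q(q-1)(2n-3)/(n-2)) A_{n-2}(q)`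
for `n ≥ 3`, with initial conditions `A_1(q) = q/(1-2q)`, `A_2(q) = 2q²(2-q)/(1-2q)`. -/
theorem Avalue_recurrence (q : ℝ) (hq : q ≠ 1 / 2) (n : ℕ) (hn : 3 ≤ n) :
    Avalue n q =
      -((4 * n * q ^ 2 - 4 * n * q - 6 * q ^ 2 - n + 6 * q) / ((n : ℝ) - 1))
          * Avalue (n - 1) q
        + (2 * q * (q - 1) * (2 * n - 3) / ((n : ℝ) - 2)) * Avalue (n - 2) q
      ∧ Avalue 1 q = q / (1 - 2 * q)
      ∧ Avalue 2 q = 2 * q ^ 2 * (2 - q) / (1 - 2 * q) := by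
  refine ⟨?_, ?_, ?_⟩
  · obtain ⟨j, rfl⟩ := Nat.exists_eq_add_of_le hn
    rw [show 3 + j = j + 3 by omega, show j + 3 - 1 = j + 2 by omega,
      show j + 3 - 2 = j + 1 by omega]
    have hj1 : (j : ℝ) + 1 ≠ 0 := by positivity
    have hj2 : (j : ℝ) + 2 ≠ 0 := by positivity
    -- clean sums
    have e3 : Avalue (j + 3) q = q ^ (j + 3) / (1 - 2 * q) *
        ∑ m ∈ range (j + 3), ((j + m + 2).choose m : ℝ) * (1 - q) ^ m * ((j : ℝ) + 3 - (m : ℝ)) := by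
      unfold Avalue
      congr 1
      refine Finset.sum_congr rfl fun m _ => ?_
      rw [show j + 3 + m - 1 = j + m + 2 by omega]
      push_cast
      ring
    have e2 : Avalue (j + 2) q = q ^ (j + 2) / (1 - 2 * q) *
        ∑ m ∈ range (j + 2), ((j + m + 1).choose m : ℝ) * (1 - q) ^ m * ((j : ℝ) + 2 - (m : ℝ)) := by
      unfold Avalue
      congr 1
      refine Finset.sum_congr rfl fun m _ => ?_
      rw [show j + 2 + m - 1 = j + m + 1 by omega]
      push_cast
      ring
    have e1 : Avalue (j + 1) q = q ^ (j + 1) / (1 - 2 * q) *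
        ∑ m ∈ range (j + 1), ((j + m).choose m : ℝ) * (1 - q) ^ m * ((j : ℝ) + 1 - (m : ℝ)) := by
      unfold Avalue
      congr 1
      refine Finset.sum_congr rfl fun m _ => ?_
      rw [show j + 1 + m - 1 = j + m by omega]
      push_cast
      ring
    set s3 := ∑ m ∈ range (j + 3), ((j + m + 2).choose m : ℝ) * (1 - q) ^ m * ((j : ℝ) + 3 - (m : ℝ)) with hs3
    set s2 := ∑ m ∈ range (j + 2), ((j + m + 1).choose m : ℝ) * (1 - q) ^ m * ((j : ℝ) + 2 - (m : ℝ)) with hs2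
    set s1 := ∑ m ∈ range (j + 1), ((j + m).choose m : ℝ) * (1 - q) ^ m * ((j : ℝ) + 1 - (m : ℝ)) with hs1
    -- telescoping sum
    have tele : ∑ m ∈ range (j + 3), (certF q j (m + 1) - certF q j m) = certF q j (j + 3) := by
      rw [Finset.sum_range_sub (certF q j)]
      simp [certF]
    have main : ((j : ℝ) + 2) * ((j : ℝ) + 1) * q ^ 2 * s3
        + ((j : ℝ) + 1) * (4 * ((j : ℝ) + 3) * q ^ 2 - 4 * ((j : ℝ) + 3) * q - 6 * q ^ 2
            - ((j : ℝ) + 3) + 6 * q) * q *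
          (∑ m ∈ range (j + 3), ((j + m + 1).choose m : ℝ) * (1 - q) ^ m * ((j : ℝ) + 2 - (m : ℝ)))
        - ((j : ℝ) + 2) * (2 * q * (q - 1) * (2 * (j : ℝ) + 3)) *
          (∑ m ∈ range (j + 3), ((j + m).choose m : ℝ) * (1 - q) ^ m * ((j : ℝ) + 1 - (m : ℝ)))
        = certF q j (j + 3) := by
      rw [← tele, Finset.mul_sum, Finset.mul_sum, Finset.mul_sum, ← Finset.sum_add_distrib,
        ← Finset.sum_sub_distrib]
      exact Finset.sum_congr rfl fun m _ => cert_step q j m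
    -- extend/truncate the shorter sums
    have ext2 : (∑ m ∈ range (j + 3), ((j + m + 1).choose m : ℝ) * (1 - q) ^ m * ((j : ℝ) + 2 - (m : ℝ)))
        = s2 := by
      rw [Finset.sum_range_succ, hs2]
      have : ((j : ℝ) + 2 - ((j + 2 : ℕ) : ℝ)) = 0 := by push_cast; ring
      rw [this]
      ring
    have ext1 : (∑ m ∈ range (j + 3), ((j + m).choose m : ℝ) * (1 - q) ^ m * ((j : ℝ) + 1 - (m : ℝ)))
        = s1 + (((2 * j + 2).choose (j + 2) : ℝ) * (1 - q) ^ (j + 2)) * (-1) := by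
      rw [Finset.sum_range_succ, Finset.sum_range_succ, hs1]
      have h0 : ((j : ℝ) + 1 - ((j + 1 : ℕ) : ℝ)) = 0 := by push_cast; ring
      have h1 : ((j : ℝ) + 1 - ((j + 2 : ℕ) : ℝ)) = -1 := by push_cast; ring
      rw [h0, h1, show j + (j + 2) = 2 * j + 2 by omega]
      ring
    rw [ext2, ext1, cert_boundary] at main
    -- the key algebraic identity
    have key : q ^ 2 * s3 =
        -((4 * ((j : ℝ) + 3) * q ^ 2 - 4 * ((j : ℝ) + 3) * q - 6 * q ^ 2 - ((j : ℝ) + 3) + 6 * q)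
            / ((j : ℝ) + 2)) * (q * s2)
        + (2 * q * (q - 1) * (2 * ((j : ℝ) + 3) - 3) / ((j : ℝ) + 1)) * s1 := by
      field_simp
      linear_combination main
    rw [e3, e2, e1]
    push_cast
    rw [show ((j : ℝ) + 3 - 1) = (j : ℝ) + 2 by ring, show ((j : ℝ) + 3 - 2) = (j : ℝ) + 1 by ring]
    linear_combination (q ^ (j + 1) / (1 - 2 * q)) * key
  · simp [Avalue]
  · unfold Avalue
    rw [Finset.sum_range_succ, Finset.sum_range_succ]
    norm_num
    ring
end

section
/- (Limit of the conditional expected duration) For fixed 0 < q < 1/2, the ratio E_n(q) = A_n(q)/R_n(q) tends to (1-q)/(1-2q)² as n → ∞. -/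
open Finset Filter

noncomputable def sP (n : ℕ) (x : ℝ) : ℝ := ∑ m ∈ range n, ((n + m - 1).choose m : ℝ) * x ^ m

lemma srec (k : ℕ) (x : ℝ) :
    (1 - x) * sP (k + 2) x
      = sP (k + 1) x + ((2 * k + 1).choose (k + 1) : ℝ) * x ^ (k + 1)
        - ((2 * k + 2).choose (k + 1) : ℝ) * x ^ (k + 2) := by
  have e1 : sP (k + 2) x = ∑ m ∈ range (k + 2), ((k + 1 + m).choose m : ℝ) * x ^ m := by
    unfold sP
    refine Finset.sum_congr rfl fun m _ => ?_
    have : k + 2 + m - 1 = k + 1 + m := by omega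
    rw [this]
  have e2 : sP (k + 1) x = ∑ m ∈ range (k + 1), ((k + m).choose m : ℝ) * x ^ m := by
    unfold sP
    refine Finset.sum_congr rfl fun m _ => ?_
    have : k + 1 + m - 1 = k + m := by omega
    rw [this]
  have hsplit : ∑ m ∈ range (k + 2), ((k + 1 + m).choose m : ℝ) * x ^ m
      = (∑ m ∈ range (k + 1), ((k + 1 + m).choose m : ℝ) * x ^ (m + 1))
        + (∑ m ∈ range (k + 1), ((k + 1 + m).choose (m + 1) : ℝ) * x ^ (m + 1)) + 1 := by
    rw [Finset.sum_range_succ' (fun m => ((k + 1 + m).choose m : ℝ) * x ^ m) (k + 1)]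
    simp only [Nat.add_zero, Nat.choose_zero_right, Nat.cast_one, pow_zero, one_mul]
    rw [← Finset.sum_add_distrib]
    congr 1
    refine Finset.sum_congr rfl fun m _ => ?_
    have : (k + 1 + (m + 1)).choose (m + 1) = (k + 1 + m).choose m + (k + 1 + m).choose (m + 1) := by
      have h := Nat.choose_succ_succ' (k + 1 + m) m
      have e : k + 1 + (m + 1) = k + 1 + m + 1 := by omega
      rw [e, h]
    rw [this]
    push_cast
    ring
  have hfirst : ∑ m ∈ range (k + 1), ((k + 1 + m).choose m : ℝ) * x ^ (m + 1)
      = x * ∑ m ∈ range (k + 1), ((k + 1 + m).choose m : ℝ) * x ^ m := by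
    rw [Finset.mul_sum]
    exact Finset.sum_congr rfl fun m _ => by ring
  have htop : ∑ m ∈ range (k + 2), ((k + 1 + m).choose m : ℝ) * x ^ m
      = (∑ m ∈ range (k + 1), ((k + 1 + m).choose m : ℝ) * x ^ m)
        + ((2 * k + 2).choose (k + 1) : ℝ) * x ^ (k + 1) := by
    rw [Finset.sum_range_succ (fun m => ((k + 1 + m).choose m : ℝ) * x ^ m) (k + 1)]
    have e : k + 1 + (k + 1) = 2 * k + 2 := by omega
    rw [e]
  have hsecond : (∑ m ∈ range (k + 1), ((k + 1 + m).choose (m + 1) : ℝ) * x ^ (m + 1)) + 1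
      = (∑ m ∈ range (k + 1), ((k + m).choose m : ℝ) * x ^ m)
        + ((2 * k + 1).choose (k + 1) : ℝ) * x ^ (k + 1) := by
    have lhs : (∑ m ∈ range (k + 2), ((k + m).choose m : ℝ) * x ^ m)
        = (∑ m ∈ range (k + 1), ((k + 1 + m).choose (m + 1) : ℝ) * x ^ (m + 1)) + 1 := by
      rw [Finset.sum_range_succ' (fun m => ((k + m).choose m : ℝ) * x ^ m) (k + 1)]
      simp only [Nat.add_zero, Nat.choose_zero_right, Nat.cast_one, pow_zero, one_mul]
      congr 1
      refine Finset.sum_congr rfl fun m _ => ?_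
      have : k + (m + 1) = k + 1 + m := by omega
      rw [this]
    have rhs : (∑ m ∈ range (k + 2), ((k + m).choose m : ℝ) * x ^ m)
        = (∑ m ∈ range (k + 1), ((k + m).choose m : ℝ) * x ^ m)
          + ((2 * k + 1).choose (k + 1) : ℝ) * x ^ (k + 1) := by
      rw [Finset.sum_range_succ (fun m => ((k + m).choose m : ℝ) * x ^ m) (k + 1)]
      have e : k + (k + 1) = 2 * k + 1 := by omega
      rw [e]
    rw [← lhs, rhs]
  rw [e1, e2]
  linear_combination hsplit + hfirst + hsecond - x * htop

lemma sid (q : ℝ) : ∀ n, 1 ≤ n → (1 - q) ^ n * sP n q + q ^ n * sP n (1 - q) = 1 := by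
  intro n hn
  induction n with
  | zero => omega
  | succ k ih =>
    rcases Nat.lt_or_ge k 1 with h1 | h1
    · interval_cases k
      simp [sP]
    · obtain ⟨j, rfl⟩ : ∃ j, k = j + 1 := ⟨k - 1, by omega⟩
      have hq := srec j q
      have hp := srec j (1 - q)
      have hC : ((2 * j + 2).choose (j + 1) : ℝ) = 2 * ((2 * j + 1).choose (j + 1) : ℝ) := by
        have h1 : (2 * j + 2).choose (j + 1) = (2 * j + 1).choose j + (2 * j + 1).choose (j + 1) :=
          Nat.choose_succ_succ' (2 * j + 1) j |>.symm ▸ (by rw [Nat.choose_succ_succ'])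
        have h2 : (2 * j + 1).choose j = (2 * j + 1).choose (j + 1) := by
          rw [← Nat.choose_symm (by omega : j + 1 ≤ 2 * j + 1)]
          congr 1
          omega
        rw [h1, h2]
        push_cast
        ring
      have ihh := ih (by omega)
      linear_combination (1 - q) ^ (j + 1) * hq + q ^ (j + 1) * hp + ihh - q ^ (j + 1) * (1 - q) ^ (j + 1) * hC

noncomputable def aa (p : ℝ) (n k : ℕ) : ℝ :=
  if k < n then
    (((2 * n - 2 - k).choose (n - 1 - k) : ℝ) / ((2 * n - 2).choose (n - 1) : ℝ)) * (1 / p) ^ k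
  else 0

lemma aa_nonneg {p : ℝ} (hp : 0 < p) (n k : ℕ) : 0 ≤ aa p n k := by
  unfold aa
  split
  · positivity
  · exact le_rfl

lemma aa_zero {p : ℝ} {n : ℕ} (hn : 1 ≤ n) : aa p n 0 = 1 := by
  unfold aa
  rw [if_pos (by omega : 0 < n)]
  have hpos : 0 < (2 * n - 2).choose (n - 1) := Nat.choose_pos (by omega)
  rw [Nat.sub_zero, Nat.sub_zero, pow_zero, mul_one, div_self]
  exact_mod_cast hpos.ne'

lemma choose_step {n k : ℕ} (h : k + 1 < n) :
    (2 * n - 2 - k) * ((2 * n - 2 - (k + 1)).choose (n - 1 - (k + 1)))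
      = ((2 * n - 2 - k).choose (n - 1 - k)) * (n - 1 - k) := by
  have h1 := Nat.add_one_mul_choose_eq (2 * n - 3 - k) (n - 2 - k)
  have e1 : 2 * n - 3 - k + 1 = 2 * n - 2 - k := by omega
  have e2 : n - 2 - k + 1 = n - 1 - k := by omega
  rw [e1, e2] at h1
  have e3 : 2 * n - 3 - k = 2 * n - 2 - (k + 1) := by omega
  have e4 : n - 2 - k = n - 1 - (k + 1) := by omega
  rw [e3, e4] at h1
  exact h1

lemma aa_succ {p : ℝ} (hp : p ≠ 0) {n k : ℕ} (h : k + 1 < n) :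
    aa p n (k + 1) = aa p n k * (((n - 1 - k : ℕ) : ℝ) / ((2 * n - 2 - k : ℕ) : ℝ)) * (1 / p) := by
  unfold aa
  rw [if_pos (by omega : k + 1 < n), if_pos (by omega : k < n)]
  have hD : ((2 * n - 2).choose (n - 1) : ℝ) ≠ 0 := by
    exact_mod_cast (Nat.choose_pos (by omega : n - 1 ≤ 2 * n - 2)).ne'
  have hM : ((2 * n - 2 - k : ℕ) : ℝ) ≠ 0 := by
    have : 0 < 2 * n - 2 - k := by omega
    exact_mod_cast this.ne'
  have key : ((2 * n - 2 - k : ℕ) : ℝ) * ((2 * n - 2 - (k + 1)).choose (n - 1 - (k + 1)) : ℝ)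
      = ((2 * n - 2 - k).choose (n - 1 - k) : ℝ) * ((n - 1 - k : ℕ) : ℝ) := by
    exact_mod_cast congrArg (Nat.cast : ℕ → ℝ) (choose_step h)
  rw [pow_succ]
  field_simp
  linear_combination key

lemma aa_le {p : ℝ} (hp : 1 / 2 < p) (n k : ℕ) : aa p n k ≤ (1 / (2 * p)) ^ k := by
  have hp0 : 0 < p := by linarith
  induction k with
  | zero =>
    rw [pow_zero]
    by_cases hn : 1 ≤ n
    · rw [aa_zero hn]
    · unfold aa
      rw [if_neg (by omega)]
      norm_num
  | succ k ih =>
    by_cases h : k + 1 < n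
    · rw [aa_succ hp0.ne' h]
      have hden : (0:ℝ) < ((2 * n - 2 - k : ℕ) : ℝ) := by
        have : 0 < 2 * n - 2 - k := by omega
        exact_mod_cast this
      have hratio : ((n - 1 - k : ℕ) : ℝ) / ((2 * n - 2 - k : ℕ) : ℝ) ≤ 1 / 2 := by
        rw [div_le_div_iff₀ hden (by norm_num)]
        have : 2 * (n - 1 - k) ≤ 2 * n - 2 - k := by omega
        calc ((n - 1 - k : ℕ) : ℝ) * 2 = ((2 * (n - 1 - k) : ℕ) : ℝ) := by push_cast; ring
          _ ≤ ((2 * n - 2 - k : ℕ) : ℝ) := by exact_mod_cast this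
          _ = 1 * ((2 * n - 2 - k : ℕ) : ℝ) := by ring
      have h1 : aa p n k * (((n - 1 - k : ℕ) : ℝ) / ((2 * n - 2 - k : ℕ) : ℝ)) * (1 / p)
          ≤ (1 / (2 * p)) ^ k * (1 / 2) * (1 / p) := by
        apply mul_le_mul_of_nonneg_right _ (by positivity)
        apply mul_le_mul ih hratio (by positivity) (by positivity)
      calc aa p n k * (((n - 1 - k : ℕ) : ℝ) / ((2 * n - 2 - k : ℕ) : ℝ)) * (1 / p)
          ≤ (1 / (2 * p)) ^ k * (1 / 2) * (1 / p) := h1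
        _ = (1 / (2 * p)) ^ (k + 1) := by rw [pow_succ]; ring
    · unfold aa
      rw [if_neg h]
      positivity

lemma ratio_tendsto (c d : ℝ) :
    Tendsto (fun n : ℕ => ((n : ℝ) - c) / (2 * (n : ℝ) - d)) atTop (nhds (1 / 2)) := by
  have h1 : Tendsto (fun n : ℕ => (1 - c / (n : ℝ)) / (2 - d / (n : ℝ))) atTop
      (nhds ((1 - 0) / (2 - 0))) := by
    apply Tendsto.div
    · exact tendsto_const_nhds.sub (tendsto_const_div_atTop_nhds_zero_nat c)
    · exact tendsto_const_nhds.sub (tendsto_const_div_atTop_nhds_zero_nat d)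
    · norm_num
  norm_num at h1
  apply Tendsto.congr' _ h1
  filter_upwards [eventually_ge_atTop 1] with n hn
  have hn' : (n : ℝ) ≠ 0 := by positivity
  have e1 : 1 - c / (n : ℝ) = ((n : ℝ) - c) / (n : ℝ) := by field_simp
  have e2 : 2 - d / (n : ℝ) = (2 * (n : ℝ) - d) / (n : ℝ) := by field_simp
  rw [e1, e2, div_div_div_comm, div_self hn', div_one]

lemma aa_tendsto {p : ℝ} (hp : 1 / 2 < p) (k : ℕ) :
    Tendsto (fun n : ℕ => aa p n k) atTop (nhds ((1 / (2 * p)) ^ k)) := by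
  have hp0 : 0 < p := by linarith
  induction k with
  | zero =>
    rw [pow_zero]
    apply Tendsto.congr' _ tendsto_const_nhds
    filter_upwards [eventually_ge_atTop 1] with n hn
    exact (aa_zero hn).symm
  | succ k ih =>
    have hhalf := ratio_tendsto (1 + k) (2 + k)
    have h2 : Tendsto (fun n : ℕ =>
        aa p n k * (((n : ℝ) - (1 + k)) / (2 * (n : ℝ) - (2 + k))) * (1 / p)) atTop
        (nhds ((1 / (2 * p)) ^ k * (1 / 2) * (1 / p))) := (ih.mul hhalf).mul_const _
    have heq : (1 / (2 * p)) ^ k * (1 / 2) * (1 / p) = (1 / (2 * p)) ^ (k + 1) := by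
      rw [pow_succ]; ring
    rw [heq] at h2
    apply Tendsto.congr' _ h2
    filter_upwards [eventually_ge_atTop (k + 2)] with n hn
    have c1 : ((n - 1 - k : ℕ) : ℝ) = (n : ℝ) - (1 + k) := by
      have e : n - 1 - k = n - (k + 1) := by omega
      rw [e, Nat.cast_sub (by omega)]
      push_cast
      ring
    have c2 : ((2 * n - 2 - k : ℕ) : ℝ) = 2 * (n : ℝ) - (2 + k) := by
      have e : 2 * n - 2 - k = 2 * n - (k + 2) := by omega
      rw [e, Nat.cast_sub (by omega)]
      push_cast
      ring
    rw [aa_succ hp0.ne' (by omega : k + 1 < n), c1, c2]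

lemma aa_outside {p : ℝ} {n : ℕ} : ∀ k ∉ range n, aa p n k = 0 := by
  intro k hk
  unfold aa
  rw [if_neg (by simpa using hk)]

lemma sum_repr {p : ℝ} (hp : 0 < p) {n : ℕ} (hn : 1 ≤ n) :
    sP n p = (((2 * n - 2).choose (n - 1) : ℝ) * p ^ (n - 1)) * ∑' k : ℕ, aa p n k := by
  rw [tsum_eq_sum (aa_outside (p := p) (n := n)), Finset.mul_sum]
  unfold sP
  rw [← Finset.sum_range_reflect (fun m => ((n + m - 1).choose m : ℝ) * p ^ m) n]
  refine Finset.sum_congr rfl fun k hk => ?_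
  have hk' : k < n := mem_range.mp hk
  unfold aa
  rw [if_pos hk']
  have e : n + (n - 1 - k) - 1 = 2 * n - 2 - k := by omega
  rw [e]
  have hD : ((2 * n - 2).choose (n - 1) : ℝ) ≠ 0 := by
    exact_mod_cast (Nat.choose_pos (by omega : n - 1 ≤ 2 * n - 2)).ne'
  have epow : p ^ (n - 1 - k) * p ^ k = p ^ (n - 1) := by
    rw [← pow_add]
    congr 1
    omega
  field_simp
  have hpk : p ^ k * (1 / p) ^ k = 1 := by rw [← mul_pow, mul_one_div_cancel hp.ne', one_pow]
  linear_combination (((2 * n - 2 - k).choose (n - 1 - k) : ℝ) * (1 / p) ^ k) * epow - ((2 * n - 2 - k).choose (n - 1 - k) : ℝ) * p ^ (n - 1 - k) * hpk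

lemma sum_repr2 {p : ℝ} (hp : 0 < p) {n : ℕ} (hn : 1 ≤ n) :
    (∑ m ∈ range n, ((n + m - 1).choose m : ℝ) * p ^ m * ((n : ℝ) - (m : ℝ)))
      = (((2 * n - 2).choose (n - 1) : ℝ) * p ^ (n - 1)) * ∑' k : ℕ, ((k : ℝ) + 1) * aa p n k := by
  rw [tsum_eq_sum (s := range n) (fun k hk => by rw [aa_outside k hk, mul_zero]), Finset.mul_sum]
  rw [← Finset.sum_range_reflect (fun m => ((n + m - 1).choose m : ℝ) * p ^ m * ((n : ℝ) - (m : ℝ))) n]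
  refine Finset.sum_congr rfl fun k hk => ?_
  have hk' : k < n := mem_range.mp hk
  unfold aa
  rw [if_pos hk']
  have e : n + (n - 1 - k) - 1 = 2 * n - 2 - k := by omega
  rw [e]
  have c1 : ((n - 1 - k : ℕ) : ℝ) = (n : ℝ) - (1 + k) := by
    have e' : n - 1 - k = n - (k + 1) := by omega
    rw [e', Nat.cast_sub (by omega)]
    push_cast
    ring
  rw [c1]
  have hD : ((2 * n - 2).choose (n - 1) : ℝ) ≠ 0 := by
    exact_mod_cast (Nat.choose_pos (by omega : n - 1 ≤ 2 * n - 2)).ne'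
  have epow : p ^ (n - 1 - k) * p ^ k = p ^ (n - 1) := by
    rw [← pow_add]
    congr 1
    omega
  field_simp
  have hpk : p ^ k * (1 / p) ^ k = 1 := by rw [← mul_pow, mul_one_div_cancel hp.ne', one_pow]
  linear_combination (((2 * n - 2 - k).choose (n - 1 - k) : ℝ) * (1 / p) ^ k * ((k : ℝ) + 1)) * epow - ((2 * n - 2 - k).choose (n - 1 - k) : ℝ) * p ^ (n - 1 - k) * ((k : ℝ) + 1) * hpk

/-- **Theorem 5 (leading order).**  For fixed `0 < q < 1/2`, the conditional expected
duration `E_n(q) = A_n(q)/R_n(q)` tends to `(1-q)/(1-2q)²` as `n → ∞`. -/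
theorem expected_duration_limit (q : ℝ) (hq0 : 0 < q) (hq : q < 1 / 2) :
    Tendsto (fun n : ℕ => Avalue n q / Rosenfeld n q) atTop
      (nhds ((1 - q) / (1 - 2 * q) ^ 2)) := by
  have hp : 1 / 2 < 1 - q := by linarith
  have hp0 : (0:ℝ) < 1 - q := by linarith
  have h2q : (0:ℝ) < 1 - 2 * q := by linarith
  have hr0 : (0:ℝ) < 1 / (2 * (1 - q)) := by positivity
  have hr1 : 1 / (2 * (1 - q)) < 1 := by
    rw [div_lt_one (by linarith)]
    linarith
  have hnorm : ‖1 / (2 * (1 - q))‖ < 1 := by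
    rw [Real.norm_eq_abs, abs_of_pos hr0]
    exact hr1
  have h1r : (0:ℝ) < 1 - 1 / (2 * (1 - q)) := by linarith
  have hsumg : Summable (fun k : ℕ => (1 / (2 * (1 - q))) ^ k) :=
    summable_geometric_of_lt_one hr0.le hr1
  have hsum1 : Summable (fun k : ℕ => (k : ℝ) * (1 / (2 * (1 - q))) ^ k) := by
    simpa using summable_pow_mul_geometric_of_norm_lt_one 1 hnorm
  have hsumb : Summable (fun k : ℕ => ((k : ℝ) + 1) * (1 / (2 * (1 - q))) ^ k) := by
    simpa [add_mul] using hsum1.add hsumg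
  have ht1 : ∑' k : ℕ, (1 / (2 * (1 - q))) ^ k = (1 - 1 / (2 * (1 - q)))⁻¹ :=
    tsum_geometric_of_lt_one hr0.le hr1
  have ht2 : ∑' k : ℕ, ((k : ℝ) + 1) * (1 / (2 * (1 - q))) ^ k
      = ((1 - 1 / (2 * (1 - q)))⁻¹) ^ 2 := by
    have e : (fun k : ℕ => ((k : ℝ) + 1) * (1 / (2 * (1 - q))) ^ k)
        = fun k : ℕ => (k : ℝ) * (1 / (2 * (1 - q))) ^ k + (1 / (2 * (1 - q))) ^ k := by
      funext k
      ring
    rw [e, Summable.tsum_add hsum1 hsumg, tsum_coe_mul_geometric_of_norm_lt_one hnorm, ht1]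
    have gen : ∀ r : ℝ, 1 - r ≠ 0 → r / (1 - r) ^ 2 + (1 - r)⁻¹ = ((1 - r)⁻¹) ^ 2 := by
      intro r hr
      field_simp
      ring
    exact gen _ h1r.ne'
  have hc1 : Tendsto (fun n : ℕ => ∑' k : ℕ, aa (1 - q) n k) atTop
      (nhds (∑' k : ℕ, (1 / (2 * (1 - q))) ^ k)) := by
    apply tendsto_tsum_of_dominated_convergence hsumg (fun k => aa_tendsto hp k)
    apply Eventually.of_forall
    intro n k
    rw [Real.norm_eq_abs, abs_of_nonneg (aa_nonneg hp0 n k)]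
    exact aa_le hp n k
  have hc2 : Tendsto (fun n : ℕ => ∑' k : ℕ, ((k : ℝ) + 1) * aa (1 - q) n k) atTop
      (nhds (∑' k : ℕ, ((k : ℝ) + 1) * (1 / (2 * (1 - q))) ^ k)) := by
    apply tendsto_tsum_of_dominated_convergence hsumb
      (fun k => (aa_tendsto hp k).const_mul _)
    apply Eventually.of_forall
    intro n k
    rw [Real.norm_eq_abs, abs_of_nonneg (by
      have := aa_nonneg hp0 n k
      positivity)]
    exact mul_le_mul_of_nonneg_left (aa_le hp n k) (by positivity)
  rw [ht1] at hc1
  rw [ht2] at hc2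
  have hcD : Tendsto (fun n : ℕ => (1 - 2 * q) * (2 * ∑' k : ℕ, aa (1 - q) n k)) atTop
      (nhds ((1 - 2 * q) * (2 * (1 - 1 / (2 * (1 - q)))⁻¹))) :=
    (hc1.const_mul 2).const_mul (1 - 2 * q)
  have hDne : (1 - 2 * q) * (2 * (1 - 1 / (2 * (1 - q)))⁻¹) ≠ 0 := by
    have : (1 - 1 / (2 * (1 - q)))⁻¹ ≠ 0 := inv_ne_zero h1r.ne'
    positivity
  have hlim : Tendsto (fun n : ℕ =>
      (∑' k : ℕ, ((k : ℝ) + 1) * aa (1 - q) n k) / ((1 - 2 * q) * (2 * ∑' k : ℕ, aa (1 - q) n k)))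
      atTop (nhds (((1 - 1 / (2 * (1 - q)))⁻¹) ^ 2
        / ((1 - 2 * q) * (2 * (1 - 1 / (2 * (1 - q)))⁻¹)))) := hc2.div hcD hDne
  have hval : ((1 - 1 / (2 * (1 - q)))⁻¹) ^ 2 / ((1 - 2 * q) * (2 * (1 - 1 / (2 * (1 - q)))⁻¹))
      = (1 - q) / (1 - 2 * q) ^ 2 := by
    have h1r' : 1 - 1 / (2 * (1 - q)) = (1 - 2 * q) / (2 * (1 - q)) := by
      field_simp
      ring
    rw [h1r']
    field_simp
  rw [hval] at hlim
  apply Tendsto.congr' _ hlim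
  filter_upwards [eventually_ge_atTop 1] with n hn
  have hR : Rosenfeld n q = 2 * q ^ n * sP n (1 - q) := by
    have hs := sid q n hn
    unfold Rosenfeld
    unfold sP at hs ⊢
    linear_combination -hs
  have hA : Avalue n q = q ^ n / (1 - 2 * q) *
      ((((2 * n - 2).choose (n - 1) : ℝ) * (1 - q) ^ (n - 1)) * ∑' k : ℕ, ((k : ℝ) + 1) * aa (1 - q) n k) := by
    unfold Avalue
    rw [sum_repr2 hp0 hn]
  have hT : sP n (1 - q) = (((2 * n - 2).choose (n - 1) : ℝ) * (1 - q) ^ (n - 1)) * ∑' k : ℕ, aa (1 - q) n k :=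
    sum_repr hp0 hn
  have hqn : q ^ n ≠ 0 := pow_ne_zero n hq0.ne'
  have hv : (((2 * n - 2).choose (n - 1) : ℝ) * (1 - q) ^ (n - 1)) ≠ 0 := by
    have hc : ((2 * n - 2).choose (n - 1) : ℝ) ≠ 0 := by
      exact_mod_cast (Nat.choose_pos (by omega : n - 1 ≤ 2 * n - 2)).ne'
    exact mul_ne_zero hc (pow_ne_zero _ hp0.ne')
  rw [hA, hR, hT]
  rw [show q ^ n / (1 - 2 * q) *
      ((((2 * n - 2).choose (n - 1) : ℝ) * (1 - q) ^ (n - 1)) * ∑' k : ℕ, ((k : ℝ) + 1) * aa (1 - q) n k)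
    = (q ^ n * (((2 * n - 2).choose (n - 1) : ℝ) * (1 - q) ^ (n - 1)))
        * ((∑' k : ℕ, ((k : ℝ) + 1) * aa (1 - q) n k) / (1 - 2 * q)) from by ring]
  rw [show 2 * q ^ n * ((((2 * n - 2).choose (n - 1) : ℝ) * (1 - q) ^ (n - 1)) * ∑' k : ℕ, aa (1 - q) n k)
    = (q ^ n * (((2 * n - 2).choose (n - 1) : ℝ) * (1 - q) ^ (n - 1)))
        * (2 * ∑' k : ℕ, aa (1 - q) n k) from by ring]
  rw [mul_div_mul_left _ _ (mul_ne_zero hqn hv), div_div]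
end
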